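/- arXiv:1406.2919 — 4 statements merged into one kernel-verified Lean document; each statement's English description precedes it below -/
import Mathlib

section
/- Let y : [0,a] → ℝ^N be absolutely continuous and τ ∈ C¹(ℝ^N, ℝ) with 0 < τ(x) < a for all x. Suppose there exists p' > 0 such that τ'(y(t))·y'(t) − 1 < −p' for a.e. t ∈ [0,a]. Define w(t) := τ(y(t)) − t. Then w(0) > 0, w(a) < 0, w is strictly decreasing on [0,a], and there is exactly one t₁ ∈ (0,a) with w(t₁) = 0. -/
open Set MeasureTheory

/-- Exactly-one-jump argument: if `τ'(y(t))·y'(t) − 1 < −p'` a.e. on `[0,a]` and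
`0 < τ(x) < a`, then `w(t) = τ(y(t)) − t` satisfies `w(0) > 0`, `w(a) < 0`, is strictly
decreasing on `[0,a]`, and has exactly one zero `t₁ ∈ (0,a)`. -/
theorem stmt4 (a : ℝ) (ha : 0 < a) (N : ℕ)
    (y y' : ℝ → EuclideanSpace ℝ (Fin N))
    (hy' : IntegrableOn y' (Icc 0 a))
    (hy : ∀ t ∈ Icc 0 a, y t = y 0 + ∫ s in (0:ℝ)..t, y' s)
    (τ : EuclideanSpace ℝ (Fin N) → ℝ) (hτ : ContDiff ℝ 1 τ)
    (hτa : ∀ x, τ x ∈ Ioo 0 a)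
    (p' : ℝ) (hp' : 0 < p')
    (hder : ∀ᵐ t ∂(volume.restrict (Icc 0 a)),
      fderiv ℝ τ (y t) (y' t) - 1 < -p')
    (w : ℝ → ℝ) (hw : w = fun t => τ (y t) - t) :
    0 < w 0 ∧ w a < 0 ∧ StrictAntiOn w (Icc 0 a) ∧
      (∃! t₁, t₁ ∈ Ioo 0 a ∧ w t₁ = 0) := by
  subst hw
  have h0I : (0:ℝ) ∈ Icc 0 a := ⟨le_refl _, ha.le⟩
  have haI : a ∈ Icc 0 a := ⟨ha.le, le_refl _⟩
  -- the indicator version of `y'`, integrable on all of `ℝ`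
  set v : ℝ → EuclideanSpace ℝ (Fin N) := (Icc 0 a).indicator y' with hv_def
  have hv : Integrable v := (integrable_indicator_iff measurableSet_Icc).2 hy'
  have hv_eq : ∀ r ∈ Icc (0:ℝ) a, v r = y' r := fun r hr => indicator_of_mem hr y'
  -- the good version of `y`, defined and continuous on all of `ℝ`
  set Y : ℝ → EuclideanSpace ℝ (Fin N) :=
    fun t => y 0 + ∫ s in (0:ℝ)..t, v s with hY_def
  have hY_cont : Continuous Y := continuous_const.add (hv.continuous_primitive 0)
  have hYy : ∀ r ∈ Icc (0:ℝ) a, Y r = y r := by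
    intro r hr
    rw [hy r hr]
    simp only [hY_def]
    congr 1
    refine intervalIntegral.integral_congr (fun x hx => ?_)
    rw [uIcc_of_le hr.1] at hx
    exact hv_eq x ⟨hx.1, hx.2.trans hr.2⟩
  -- compact sets and bounds
  have hK : IsCompact (Y '' Icc 0 a) := isCompact_Icc.image hY_cont
  set K₁ : Set (EuclideanSpace ℝ (Fin N)) := Metric.cthickening 1 (Y '' Icc 0 a) with hK₁def
  have hK₁c : IsCompact K₁ := hK.cthickening
  have hKsub : Y '' Icc 0 a ⊆ K₁ := Metric.self_subset_cthickening _
  have hτc : Continuous τ := hτ.continuous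
  have hDc : Continuous (fderiv ℝ τ) := hτ.continuous_fderiv one_ne_zero
  obtain ⟨M, hM⟩ := hK₁c.exists_bound_of_continuousOn hDc.continuousOn
  set M' : ℝ := max M 0 with hM'def
  have hM'0 : 0 ≤ M' := le_max_right _ _
  have hUCτ : UniformContinuousOn τ K₁ :=
    hK₁c.uniformContinuousOn_of_continuous hτc.continuousOn
  have hUCD : UniformContinuousOn (fderiv ℝ τ) K₁ :=
    hK₁c.uniformContinuousOn_of_continuous hDc.continuousOn
  set V : ℝ := ∫ x, ‖v x‖ with hVdef
  have hV0 : 0 ≤ V := integral_nonneg fun x => norm_nonneg _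
  -- the a.e. derivative bound transported to `Y, v`
  have hder' : ∀ᵐ r ∂(volume.restrict (Icc (0:ℝ) a)),
      (fderiv ℝ τ (Y r)) (v r) ≤ 1 - p' := by
    filter_upwards [hder, ae_restrict_mem measurableSet_Icc] with r h1 h2
    rw [hYy r h2, hv_eq r h2]
    linarith
  -- the key inequality
  have key : ∀ s ∈ Icc (0:ℝ) a, ∀ t ∈ Icc (0:ℝ) a, s ≤ t →
      τ (y t) - τ (y s) ≤ (1 - p') * (t - s) := by
    intro s hs t ht hst
    rw [← hYy s hs, ← hYy t ht]
    refine le_of_forall_pos_le_add fun η hη => ?_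
    set ε : ℝ := η / 4 / (V + 1) with hεdef
    have hε : 0 < ε := by positivity
    obtain ⟨δ₂, hδ₂pos, hδ₂⟩ := Metric.uniformContinuousOn_iff.1 hUCD ε hε
    obtain ⟨δ₁, hδ₁pos, hδ₁⟩ := Metric.uniformContinuousOn_iff.1 hUCτ (η / 8) (by positivity)
    set δ : ℝ := min 1 (min (min δ₁ δ₂ / 2) (η / 4 / (M' + 1))) with hδdef
    have hδpos : 0 < δ := by
      refine lt_min one_pos (lt_min (by positivity) (by positivity))
    have hδ1 : δ ≤ 1 := min_le_left _ _
    have hδlt₁ : δ < δ₁ := by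
      calc δ ≤ min δ₁ δ₂ / 2 := le_trans (min_le_right _ _) (min_le_left _ _)
        _ < min δ₁ δ₂ := by
            have : (0:ℝ) < min δ₁ δ₂ := lt_min hδ₁pos hδ₂pos
            linarith
        _ ≤ δ₁ := min_le_left _ _
    have hδlt₂ : δ < δ₂ := by
      calc δ ≤ min δ₁ δ₂ / 2 := le_trans (min_le_right _ _) (min_le_left _ _)
        _ < min δ₁ δ₂ := by
            have : (0:ℝ) < min δ₁ δ₂ := lt_min hδ₁pos hδ₂pos
            linarith
        _ ≤ δ₂ := min_le_right _ _
    have hδM : δ ≤ η / 4 / (M' + 1) := le_trans (min_le_right _ _) (min_le_right _ _)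
    obtain ⟨g, hgsupp, hgint, hgcont, hgInt⟩ := hv.exists_hasCompactSupport_integral_sub_le hδpos
    -- the smooth approximation `Z` of `Y`
    set Z : ℝ → EuclideanSpace ℝ (Fin N) :=
      fun t => y 0 + ∫ u in (0:ℝ)..t, g u with hZdef
    have hZder : ∀ r, HasDerivAt Z (g r) r := fun r =>
      ((hgcont.integral_hasStrictDerivAt 0 r).hasDerivAt).const_add _
    have hZcont : Continuous Z := continuous_const.add (hgInt.continuous_primitive 0)
    have hgv : ∫ u, ‖g u - v u‖ ≤ δ := by
      calc ∫ u, ‖g u - v u‖ = ∫ u, ‖v u - g u‖ := by simp_rw [norm_sub_rev]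
        _ ≤ δ := hgint
    have hdistZY : ∀ r ∈ Icc (0:ℝ) a, dist (Z r) (Y r) ≤ δ := by
      intro r hr
      have h1 : Z r - Y r = ∫ u in (0:ℝ)..r, (g u - v u) := by
        simp only [hZdef, hY_def]
        rw [intervalIntegral.integral_sub hgInt.intervalIntegrable hv.intervalIntegrable]
        abel
      rw [dist_eq_norm, h1]
      calc ‖∫ u in (0:ℝ)..r, (g u - v u)‖ ≤ ∫ u in (0:ℝ)..r, ‖g u - v u‖ :=
            intervalIntegral.norm_integral_le_integral_norm hr.1
        _ = ∫ u in Ioc (0:ℝ) r, ‖g u - v u‖ := intervalIntegral.integral_of_le hr.1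
        _ ≤ ∫ u, ‖g u - v u‖ :=
            setIntegral_le_integral (hgInt.sub hv).norm
              (Filter.Eventually.of_forall fun x => norm_nonneg _)
        _ ≤ δ := hgv
    have hYK : ∀ r ∈ Icc (0:ℝ) a, Y r ∈ K₁ := fun r hr => hKsub (mem_image_of_mem Y hr)
    have hZK : ∀ r ∈ Icc (0:ℝ) a, Z r ∈ K₁ := fun r hr =>
      Metric.mem_cthickening_of_dist_le (Z r) (Y r) 1 _ (mem_image_of_mem Y hr)
        ((hdistZY r hr).trans hδ1)
    -- FTC for `τ ∘ Z`
    have hFder : ∀ r, HasDerivAt (fun u => τ (Z u)) ((fderiv ℝ τ (Z r)) (g r)) r := fun r =>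
      ((hτ.differentiable one_ne_zero (Z r)).hasFDerivAt).comp_hasDerivAt r (hZder r)
    have hF'cont : Continuous fun r => (fderiv ℝ τ (Z r)) (g r) :=
      (hDc.comp hZcont).clm_apply hgcont
    have hFTC : ∫ r in s..t, (fderiv ℝ τ (Z r)) (g r) = τ (Z t) - τ (Z s) :=
      intervalIntegral.integral_eq_sub_of_hasDerivAt (fun r _ => hFder r)
        (hF'cont.intervalIntegrable s t)
    -- pointwise bound on the integrand
    have hsub : Icc s t ⊆ Icc (0:ℝ) a := Icc_subset_Icc hs.1 ht.2
    have hbound : ∀ᵐ r ∂(volume.restrict (Icc s t)),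
        (fderiv ℝ τ (Z r)) (g r) ≤ M' * ‖g r - v r‖ + ε * ‖v r‖ + (1 - p') := by
      filter_upwards [ae_restrict_of_ae_restrict_of_subset hsub hder',
        ae_restrict_mem measurableSet_Icc] with r h1 hr
      have hrI : r ∈ Icc (0:ℝ) a := hsub hr
      have e1 : (fderiv ℝ τ (Z r)) (g r) = (fderiv ℝ τ (Z r)) (g r - v r) +
          ((fderiv ℝ τ (Z r) - fderiv ℝ τ (Y r)) (v r)) + (fderiv ℝ τ (Y r)) (v r) := by
        rw [ContinuousLinearMap.sub_apply, map_sub]; ring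
      have b1 : (fderiv ℝ τ (Z r)) (g r - v r) ≤ M' * ‖g r - v r‖ := by
        calc (fderiv ℝ τ (Z r)) (g r - v r) ≤ ‖(fderiv ℝ τ (Z r)) (g r - v r)‖ :=
              le_abs_self _
          _ ≤ ‖fderiv ℝ τ (Z r)‖ * ‖g r - v r‖ := (fderiv ℝ τ (Z r)).le_opNorm _
          _ ≤ M' * ‖g r - v r‖ :=
              mul_le_mul_of_nonneg_right
                ((hM _ (hZK r hrI)).trans (le_max_left _ _)) (norm_nonneg _)
      have b2 : (fderiv ℝ τ (Z r) - fderiv ℝ τ (Y r)) (v r) ≤ ε * ‖v r‖ := by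
        have hd : dist (fderiv ℝ τ (Z r)) (fderiv ℝ τ (Y r)) < ε :=
          hδ₂ _ (hZK r hrI) _ (hYK r hrI) ((hdistZY r hrI).trans_lt hδlt₂)
        rw [dist_eq_norm] at hd
        calc (fderiv ℝ τ (Z r) - fderiv ℝ τ (Y r)) (v r)
            ≤ ‖(fderiv ℝ τ (Z r) - fderiv ℝ τ (Y r)) (v r)‖ := le_abs_self _
          _ ≤ ‖fderiv ℝ τ (Z r) - fderiv ℝ τ (Y r)‖ * ‖v r‖ :=
              (fderiv ℝ τ (Z r) - fderiv ℝ τ (Y r)).le_opNorm _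
          _ ≤ ε * ‖v r‖ := mul_le_mul_of_nonneg_right hd.le (norm_nonneg _)
      rw [e1]
      linarith
    -- integrate the bound
    have hI1 : Integrable (fun r => M' * ‖g r - v r‖) := (hgInt.sub hv).norm.const_mul M'
    have hI2 : Integrable (fun r => ε * ‖v r‖) := hv.norm.const_mul ε
    have hIa : IntervalIntegrable (fun r => M' * ‖g r - v r‖ + ε * ‖v r‖) volume s t :=
      hI1.intervalIntegrable.add hI2.intervalIntegrable
    have hInt1 : IntervalIntegrable
        (fun r => M' * ‖g r - v r‖ + ε * ‖v r‖ + (1 - p')) volume s t :=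
      hIa.add intervalIntegrable_const
    have hle : ∫ r in s..t, (fderiv ℝ τ (Z r)) (g r) ≤
        ∫ r in s..t, (M' * ‖g r - v r‖ + ε * ‖v r‖ + (1 - p')) :=
      intervalIntegral.integral_mono_ae_restrict hst
        (hF'cont.intervalIntegrable s t) hInt1 hbound
    have hR : ∫ r in s..t, (M' * ‖g r - v r‖ + ε * ‖v r‖ + (1 - p')) ≤
        M' * δ + ε * V + (1 - p') * (t - s) := by
      rw [intervalIntegral.integral_add hIa intervalIntegrable_const,
        intervalIntegral.integral_add hI1.intervalIntegrable hI2.intervalIntegrable,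
        intervalIntegral.integral_const_mul, intervalIntegral.integral_const_mul,
        intervalIntegral.integral_const]
      have e2 : ∫ r in s..t, ‖g r - v r‖ ≤ δ := by
        rw [intervalIntegral.integral_of_le hst]
        exact le_trans
          (setIntegral_le_integral (hgInt.sub hv).norm
            (Filter.Eventually.of_forall fun x => norm_nonneg _)) hgv
      have e3 : ∫ r in s..t, ‖v r‖ ≤ V := by
        rw [intervalIntegral.integral_of_le hst]
        exact setIntegral_le_integral hv.norm
          (Filter.Eventually.of_forall fun x => norm_nonneg _)
      have := mul_le_mul_of_nonneg_left e2 hM'0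
      have := mul_le_mul_of_nonneg_left e3 hε.le
      have : (t - s) • (1 - p') = (1 - p') * (t - s) := by rw [smul_eq_mul]; ring
      rw [this]
      nlinarith [mul_le_mul_of_nonneg_left e2 hM'0, mul_le_mul_of_nonneg_left e3 hε.le]
    -- numeric bounds on the error terms
    have hMδ : M' * δ ≤ η / 4 := by
      have h1 : M' * δ ≤ M' * (η / 4 / (M' + 1)) := mul_le_mul_of_nonneg_left hδM hM'0
      have hM1 : (0:ℝ) < M' + 1 := by positivity
      have h3 : M' / (M' + 1) ≤ 1 := (div_le_one hM1).2 (by linarith)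
      have h2 : M' * (η / 4 / (M' + 1)) ≤ η / 4 := by
        calc M' * (η / 4 / (M' + 1)) = η / 4 * (M' / (M' + 1)) := by ring
          _ ≤ η / 4 * 1 := mul_le_mul_of_nonneg_left h3 (by positivity)
          _ = η / 4 := mul_one _
      linarith
    have hεV : ε * V ≤ η / 4 := by
      have hV1 : (0:ℝ) < V + 1 := by positivity
      have h4 : ε * V ≤ ε * (V + 1) := mul_le_mul_of_nonneg_left (by linarith) hε.le
      have h2 : ε * (V + 1) = η / 4 := div_mul_cancel₀ _ (ne_of_gt hV1)
      linarith
    -- endpoint comparison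
    have hτZY : ∀ r ∈ Icc (0:ℝ) a, dist (τ (Z r)) (τ (Y r)) < η / 8 := fun r hr =>
      hδ₁ _ (hZK r hr) _ (hYK r hr) ((hdistZY r hr).trans_lt hδlt₁)
    have hdt := hτZY t ht
    have hds := hτZY s hs
    rw [Real.dist_eq, abs_lt] at hdt hds
    have hZbound : τ (Z t) - τ (Z s) ≤ (1 - p') * (t - s) + η / 2 := by
      rw [← hFTC]
      have := hle.trans hR
      linarith
    linarith
  -- the conclusion pieces
  have hanti : StrictAntiOn (fun t => τ (y t) - t) (Icc (0:ℝ) a) := by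
    intro s hs t ht hst
    have hk := key s hs t ht hst.le
    have hps : 0 < p' * (t - s) := mul_pos hp' (sub_pos.2 hst)
    have hexp : (1 - p') * (t - s) = (t - s) - p' * (t - s) := by ring
    show τ (y t) - t < τ (y s) - s
    linarith
  have hwcont : ContinuousOn (fun t => τ (y t) - t) (Icc (0:ℝ) a) := by
    have hc : ContinuousOn (fun t => τ (Y t) - t) (Icc (0:ℝ) a) :=
      ((hτc.comp hY_cont).sub continuous_id).continuousOn
    exact hc.congr fun r hr => by simp [hYy r hr]
  have hw0 : 0 < τ (y 0) - 0 := by simpa using (hτa (y 0)).1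
  have hwa : τ (y a) - a < 0 := by simpa [sub_neg] using (hτa (y a)).2
  refine ⟨hw0, hwa, hanti, ?_⟩
  have h0mem : (0:ℝ) ∈ Ioo (τ (y a) - a) (τ (y 0) - 0) := ⟨hwa, hw0⟩
  obtain ⟨t₁, ht₁, hwt₁⟩ := intermediate_value_Ioo' ha.le hwcont h0mem
  refine ⟨t₁, ⟨ht₁, hwt₁⟩, ?_⟩
  rintro t₂ ⟨ht₂, hwt₂⟩
  have heq : τ (y t₂) - t₂ = τ (y t₁) - t₁ := by
    have h2 : τ (y t₂) - t₂ = 0 := hwt₂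
    have h1 : τ (y t₁) - t₁ = 0 := hwt₁
    rw [h2, h1]
  exact hanti.injOn (Ioo_subset_Icc_self ht₂) (Ioo_subset_Icc_self ht₁) heq
end

section
/- Let y : [t₀,a] → ℝ^N be absolutely continuous, τ ∈ C¹(ℝ^N,ℝ), p' > 0, and suppose τ'(y(t))·y'(t) − 1 < −p' for a.e. t ∈ [t₀,a]. If τ(y(t₀)) − t₀ ≤ 0 then τ(y(t)) − t < 0 for all t ∈ (t₀,a]; in particular y does not hit the hypersurface {(t,x) : t = τ(x)} on (t₀,a]. -/
open Set MeasureTheory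

/-- After a jump: if `τ'(y(t))·y'(t) − 1 < −p'` a.e. on `[t₀,a]` and `τ(y(t₀)) − t₀ ≤ 0`,
then `τ(y(t)) − t < 0` on `(t₀,a]`, so the solution does not hit `{t = τ(x)}` again. -/
theorem stmt5 (t₀ a : ℝ) (ht₀a : t₀ < a) (N : ℕ)
    (y y' : ℝ → EuclideanSpace ℝ (Fin N))
    (hy' : IntegrableOn y' (Icc t₀ a))
    (hy : ∀ t ∈ Icc t₀ a, y t = y t₀ + ∫ s in t₀..t, y' s)
    (τ : EuclideanSpace ℝ (Fin N) → ℝ) (hτ : ContDiff ℝ 1 τ)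
    (p' : ℝ) (hp' : 0 < p')
    (hder : ∀ᵐ t ∂(volume.restrict (Icc t₀ a)),
      fderiv ℝ τ (y t) (y' t) - 1 < -p')
    (hstart : τ (y t₀) - t₀ ≤ 0) :
    (∀ t ∈ Ioc t₀ a, τ (y t) - t < 0) ∧ (∀ t ∈ Ioc t₀ a, t ≠ τ (y t)) := by
  have hIcc : uIcc t₀ a = Icc t₀ a := uIcc_of_le ht₀a.le
  have ht₀m : t₀ ∈ Icc t₀ a := ⟨le_rfl, ht₀a.le⟩
  have hycont : ContinuousOn y (Icc t₀ a) := by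
    have h1 : ContinuousOn (fun t => y t₀ + ∫ s in t₀..t, y' s) (Icc t₀ a) := by
      refine continuous_const.continuousOn.add ?_
      have h2 := intervalIntegral.continuousOn_primitive_interval (μ := volume)
        (f := y') (a := t₀) (b := a) (by rwa [hIcc])
      rwa [hIcc] at h2
    exact h1.congr hy
  have hφcont : ContinuousOn (fun s => fderiv ℝ τ (y s)) (Icc t₀ a) :=
    (hτ.continuous_fderiv one_ne_zero).comp_continuousOn hycont
  obtain ⟨M, hM⟩ := isCompact_Icc.exists_bound_of_continuousOn hφcont
  set g : ℝ → ℝ := fun s => fderiv ℝ τ (y s) (y' s) with hgdef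
  have hgmeas : AEStronglyMeasurable g (volume.restrict (Icc t₀ a)) :=
    isBoundedBilinearMap_apply.continuous.comp_aestronglyMeasurable
      ((hφcont.aestronglyMeasurable measurableSet_Icc).prodMk hy'.aestronglyMeasurable)
  have hgint : IntegrableOn g (Icc t₀ a) := by
    refine Integrable.mono' (hy'.norm.const_mul M) hgmeas ?_
    filter_upwards [ae_restrict_mem measurableSet_Icc] with s hs
    calc ‖g s‖ ≤ ‖fderiv ℝ τ (y s)‖ * ‖y' s‖ := (fderiv ℝ τ (y s)).le_opNorm _
      _ ≤ M * ‖y' s‖ := mul_le_mul_of_nonneg_right (hM s hs) (norm_nonneg _)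
  have h1int : IntegrableOn (fun s => ‖y' s‖ + 1) (Icc t₀ a) :=
    hy'.norm.add (integrableOn_const measure_Icc_lt_top.ne)
  -- interval integrability on subintervals
  have hsub : ∀ c ∈ Icc t₀ a, ∀ d ∈ Icc t₀ a, uIcc c d ⊆ Icc t₀ a := by
    intro c hc d hd
    rw [← hIcc] at hc hd ⊢
    exact uIcc_subset_uIcc hc hd
  have hIy : ∀ c ∈ Icc t₀ a, ∀ d ∈ Icc t₀ a, IntervalIntegrable y' volume c d :=
    fun c hc d hd => (hy'.mono_set (hsub c hc d hd)).intervalIntegrable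
  have hIg : ∀ c ∈ Icc t₀ a, ∀ d ∈ Icc t₀ a, IntervalIntegrable g volume c d :=
    fun c hc d hd => (hgint.mono_set (hsub c hc d hd)).intervalIntegrable
  have hI1 : ∀ c ∈ Icc t₀ a, ∀ d ∈ Icc t₀ a,
      IntervalIntegrable (fun s => ‖y' s‖ + 1) volume c d :=
    fun c hc d hd => (h1int.mono_set (hsub c hc d hd)).intervalIntegrable
  -- Key: approximate fundamental theorem for τ ∘ y
  have key : ∀ ε : ℝ, 0 < ε → ∀ t ∈ Icc t₀ a,
      τ (y t) - τ (y t₀) ≤ (∫ s in t₀..t, g s) + ε * ∫ s in t₀..t, (‖y' s‖ + 1) := by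
    intro ε hε
    set F : ℝ → ℝ := fun t => τ (y t) - τ (y t₀) - (∫ s in t₀..t, g s)
        - ε * ∫ s in t₀..t, (‖y' s‖ + 1) with hF
    suffices h : Icc t₀ a ⊆ {t | F t ≤ 0} by
      intro t ht
      have := h ht
      simp only [mem_setOf_eq, hF] at this
      linarith
    have hFcont : ContinuousOn F (Icc t₀ a) := by
      refine ContinuousOn.sub (ContinuousOn.sub (ContinuousOn.sub
        (hτ.continuous.comp_continuousOn hycont) continuousOn_const) ?_) ?_
      · have h2 := intervalIntegral.continuousOn_primitive_interval (μ := volume)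
          (f := g) (a := t₀) (b := a) (by rwa [hIcc])
        rwa [hIcc] at h2
      · refine continuousOn_const.mul ?_
        have h2 := intervalIntegral.continuousOn_primitive_interval (μ := volume)
          (f := fun s => ‖y' s‖ + 1) (a := t₀) (b := a) (by rwa [hIcc])
        rwa [hIcc] at h2
    have hclosed : IsClosed ({t | F t ≤ 0} ∩ Icc t₀ a) := by
      rw [inter_comm]
      exact hFcont.preimage_isClosed_of_isClosed isClosed_Icc isClosed_Iic
    refine hclosed.Icc_subset_of_forall_exists_gt ?_ ?_
    · show F t₀ ≤ 0
      simp [hF]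
    rintro x ⟨hxF, hx⟩ z hz
    have hxF : F x ≤ 0 := hxF
    have hxm : x ∈ Icc t₀ a := ⟨hx.1, hx.2.le⟩
    -- Taylor estimate near y x
    have hdτ : HasFDerivAt τ (fderiv ℝ τ (y x)) (y x) :=
      (hτ.differentiable one_ne_zero (y x)).hasFDerivAt
    have htay : ∀ᶠ v in nhds (y x),
        ‖τ v - τ (y x) - fderiv ℝ τ (y x) (v - y x)‖ ≤ ε / 2 * ‖v - y x‖ :=
      (hdτ.isLittleO.def (half_pos hε))
    have h1 : ∀ᶠ u in nhdsWithin x (Icc t₀ a),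
        ‖τ (y u) - τ (y x) - fderiv ℝ τ (y x) (y u - y x)‖ ≤ ε / 2 * ‖y u - y x‖ :=
      (hycont x hxm).eventually htay
    have h2 : ∀ᶠ u in nhdsWithin x (Icc t₀ a),
        dist (fderiv ℝ τ (y u)) (fderiv ℝ τ (y x)) < ε / 2 :=
      (Metric.tendsto_nhds.1 (hφcont x hxm)) (ε / 2) (half_pos hε)
    have h3 := h1.and h2
    obtain ⟨δ, hδ, hδP⟩ := Metric.mem_nhdsWithin_iff.1 h3
    set u := min z (min (x + δ / 2) a) with hu
    have hxu : x < u := lt_min hz (lt_min (by linarith) hx.2)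
    have hua : u ≤ a := (min_le_right _ _).trans (min_le_right _ _)
    have huxδ : u ≤ x + δ / 2 := (min_le_right _ _).trans (min_le_left _ _)
    have hum : u ∈ Icc t₀ a := ⟨hx.1.trans hxu.le, hua⟩
    have hdist : ∀ s ∈ Icc x u, s ∈ Icc t₀ a ∧ dist s x < δ := by
      intro s hs
      refine ⟨⟨hx.1.trans hs.1, hs.2.trans hua⟩, ?_⟩
      rw [Real.dist_eq, abs_of_nonneg (by linarith [hs.1])]
      linarith [hs.2]
    have hyy : y u - y x = ∫ s in x..u, y' s := by
      rw [hy u hum, hy x hxm, add_sub_add_left_eq_sub]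
      exact intervalIntegral.integral_interval_sub_left (hIy t₀ ht₀m u hum) (hIy t₀ ht₀m x hxm)
    have hIyu : IntervalIntegrable y' volume x u := hIy x hxm u hum
    have hum' := (hdist u ⟨hxu.le, le_rfl⟩)
    have e1 : ‖τ (y u) - τ (y x) - fderiv ℝ τ (y x) (y u - y x)‖ ≤ ε / 2 * ‖y u - y x‖ :=
      (hδP ⟨Metric.mem_ball.2 hum'.2, hum'.1⟩).1
    have e2 : fderiv ℝ τ (y x) (y u - y x) = ∫ s in x..u, fderiv ℝ τ (y x) (y' s) := by
      rw [hyy, (fderiv ℝ τ (y x)).intervalIntegral_comp_comm hIyu]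
    have hILy : IntervalIntegrable (fun s => fderiv ℝ τ (y x) (y' s)) volume x u :=
      ⟨(fderiv ℝ τ (y x)).integrable_comp hIyu.1,
        (fderiv ℝ τ (y x)).integrable_comp hIyu.2⟩
    have e3 : (∫ s in x..u, fderiv ℝ τ (y x) (y' s))
        ≤ (∫ s in x..u, g s) + ε / 2 * ∫ s in x..u, ‖y' s‖ := by
      have hbd : ∀ s ∈ Icc x u, fderiv ℝ τ (y x) (y' s) ≤ g s + ε / 2 * ‖y' s‖ := by
        intro s hs
        obtain ⟨hsm, hsd⟩ := hdist s hs
        have hdd : dist (fderiv ℝ τ (y s)) (fderiv ℝ τ (y x)) < ε / 2 :=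
          (hδP ⟨Metric.mem_ball.2 hsd, hsm⟩).2
        have h4 : fderiv ℝ τ (y x) (y' s) - g s
            = (fderiv ℝ τ (y x) - fderiv ℝ τ (y s)) (y' s) := by
          simp [hgdef, ContinuousLinearMap.sub_apply]
        have h5 : (fderiv ℝ τ (y x) - fderiv ℝ τ (y s)) (y' s)
            ≤ ‖fderiv ℝ τ (y x) - fderiv ℝ τ (y s)‖ * ‖y' s‖ := by
          calc (fderiv ℝ τ (y x) - fderiv ℝ τ (y s)) (y' s)
              ≤ ‖(fderiv ℝ τ (y x) - fderiv ℝ τ (y s)) (y' s)‖ := le_abs_self _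
            _ ≤ _ := (fderiv ℝ τ (y x) - fderiv ℝ τ (y s)).le_opNorm _
        have h6 : ‖fderiv ℝ τ (y x) - fderiv ℝ τ (y s)‖ ≤ ε / 2 := by
          rw [← dist_eq_norm, dist_comm]
          exact hdd.le
        nlinarith [norm_nonneg (y' s)]
      have hrhs : IntervalIntegrable (fun s => g s + ε / 2 * ‖y' s‖) volume x u :=
        (hIg x hxm u hum).add ((hIyu.norm).const_mul _)
      have hmono := intervalIntegral.integral_mono_on hxu.le hILy hrhs hbd
      rwa [intervalIntegral.integral_add (hIg x hxm u hum) (hIyu.norm.const_mul _),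
        intervalIntegral.integral_const_mul] at hmono
    have e4 : ‖y u - y x‖ ≤ ∫ s in x..u, ‖y' s‖ := by
      rw [hyy]
      exact intervalIntegral.norm_integral_le_integral_norm hxu.le
    have e5 : (∫ s in x..u, ‖y' s‖) ≤ ∫ s in x..u, (‖y' s‖ + 1) :=
      intervalIntegral.integral_mono_on hxu.le hIyu.norm (hI1 x hxm u hum)
        (fun s _ => by linarith)
    have e0 : (0:ℝ) ≤ ∫ s in x..u, ‖y' s‖ :=
      intervalIntegral.integral_nonneg hxu.le (fun s _ => norm_nonneg _)
    have e1' : τ (y u) - τ (y x) - fderiv ℝ τ (y x) (y u - y x) ≤ ε / 2 * ‖y u - y x‖ :=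
      (le_abs_self _).trans (by simpa [Real.norm_eq_abs] using e1)
    have hkey : τ (y u) - τ (y x)
        ≤ (∫ s in x..u, g s) + ε * ∫ s in x..u, (‖y' s‖ + 1) := by
      have h7 : ε / 2 * ‖y u - y x‖ ≤ ε / 2 * ∫ s in x..u, ‖y' s‖ :=
        mul_le_mul_of_nonneg_left e4 (by linarith)
      nlinarith [e1', e2, e3, e5]
    refine ⟨u, ?_, hxu, min_le_left _ _⟩
    show F u ≤ 0
    have hadd1 : (∫ s in t₀..x, g s) + (∫ s in x..u, g s) = ∫ s in t₀..u, g s :=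
      intervalIntegral.integral_add_adjacent_intervals (hIg t₀ ht₀m x hxm) (hIg x hxm u hum)
    have hadd2 : (∫ s in t₀..x, (‖y' s‖ + 1)) + (∫ s in x..u, (‖y' s‖ + 1))
        = ∫ s in t₀..u, (‖y' s‖ + 1) :=
      intervalIntegral.integral_add_adjacent_intervals (hI1 t₀ ht₀m x hxm) (hI1 x hxm u hum)
    simp only [hF] at hxF ⊢
    nlinarith [hkey]
  -- From key, the exact inequality (ε → 0)
  have hmain : ∀ t ∈ Icc t₀ a, τ (y t) - τ (y t₀) ≤ ∫ s in t₀..t, g s := by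
    intro t ht
    refine le_of_forall_pos_le_add ?_
    intro ε' hε'
    set C : ℝ := ∫ s in t₀..t, (‖y' s‖ + 1) with hC
    have hC0 : 0 ≤ C :=
      intervalIntegral.integral_nonneg ht.1 (fun s _ => by positivity)
    have hεp : 0 < ε' / (C + 1) := by positivity
    have := key (ε' / (C + 1)) hεp t ht
    have hle : ε' / (C + 1) * C ≤ ε' := by
      rw [div_mul_eq_mul_div, div_le_iff₀ (by linarith)]
      nlinarith
    linarith
  -- bound the integral of g
  have hbound : ∀ t ∈ Icc t₀ a, (∫ s in t₀..t, g s) ≤ (1 - p') * (t - t₀) := by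
    intro t ht
    have hae : ∀ᵐ s ∂(volume.restrict (Icc t₀ t)), g s ≤ 1 - p' := by
      have := ae_restrict_of_ae_restrict_of_subset (Icc_subset_Icc le_rfl ht.2) hder
      filter_upwards [this] with s hs
      simp only [hgdef]
      linarith
    have h := intervalIntegral.integral_mono_ae_restrict ht.1 (hIg t₀ ht₀m t ht)
      (intervalIntegrable_const (c := 1 - p')) hae
    rwa [intervalIntegral.integral_const, smul_eq_mul, mul_comm] at h
  have hfinal : ∀ t ∈ Ioc t₀ a, τ (y t) - t < 0 := by
    intro t ht
    have htm : t ∈ Icc t₀ a := ⟨ht.1.le, ht.2⟩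
    have h1 := hmain t htm
    have h2 := hbound t htm
    have h3 : 0 < t - t₀ := by linarith [ht.1]
    nlinarith
  refine ⟨hfinal, fun t ht heq => ?_⟩
  have := hfinal t ht
  rw [← heq] at this
  linarith
end

section
/- Let g : [0,a] × ℝ^N → ℝ^N be measurable in t, locally Lipschitz in y with integrable local Lipschitz bounds, and satisfy ‖g(t,y)‖ ≤ α(t)(1+‖y‖)+1 with α ∈ L¹. Let τ ∈ C¹(ℝ^N,ℝ) with 0 < τ(y) < a, τ(y + I(y)) ≤ τ(y) for a continuous I : ℝ^N → ℝ^N, and suppose there exists p' > 0 with τ'(y)·g(t,y) − 1 < −p' for a.e. t and all y in the relevant bounded set. Then the impulsive problem y'(t) = g(t,y(t)) for t ≠ τ(y(t)), y(0) = y₀, y(t⁺) = y(t) + I(y(t)) at t = τ(y(t)), has exactly one solution on [0,a], and this solution has exactly one jump. -/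
set_option maxHeartbeats 1600000

open Set MeasureTheory Metric

section aux
variable {E : Type*} [NormedAddCommGroup E] [NormedSpace ℝ E]

/-- radial projection onto the closed ball of radius `R`. -/
noncomputable def radProj (R : ℝ) (x : E) : E := if ‖x‖ ≤ R then x else (R * ‖x‖⁻¹) • x

lemma radProj_eq_self {R : ℝ} {x : E} (h : ‖x‖ ≤ R) : radProj R x = x := if_pos h

lemma radProj_norm {R : ℝ} (hR : 0 ≤ R) (x : E) : ‖radProj R x‖ ≤ R := by
  unfold radProj
  split_ifs with h
  · exact h
  · push_neg at h
    have hx : 0 < ‖x‖ := lt_of_le_of_lt hR h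
    rw [norm_smul, Real.norm_eq_abs, abs_of_nonneg (by positivity), mul_assoc,
      inv_mul_cancel₀ (ne_of_gt hx), mul_one]

lemma radProj_norm_le_self {R : ℝ} (hR : 0 ≤ R) (x : E) : ‖radProj R x‖ ≤ ‖x‖ := by
  unfold radProj
  split_ifs with h
  · exact le_rfl
  · push_neg at h
    have hx : 0 < ‖x‖ := lt_of_le_of_lt hR h
    rw [norm_smul, Real.norm_eq_abs, abs_of_nonneg (by positivity), mul_assoc,
      inv_mul_cancel₀ (ne_of_gt hx), mul_one]
    exact le_of_lt h

private lemma radProj_lip_aux {R : ℝ} (hR : 0 ≤ R) {x y : E} (hx : ‖x‖ ≤ R) (hy : R < ‖y‖) :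
    ‖radProj R x - radProj R y‖ ≤ 2 * ‖x - y‖ := by
  have hy0 : 0 < ‖y‖ := lt_of_le_of_lt hR hy
  rw [radProj_eq_self hx, radProj, if_neg (not_le.mpr hy)]
  have h1 : ‖y - (R * ‖y‖⁻¹) • y‖ = ‖y‖ - R := by
    have : y - (R * ‖y‖⁻¹) • y = (1 - R * ‖y‖⁻¹) • y := by
      rw [sub_smul, one_smul]
    rw [this, norm_smul, Real.norm_eq_abs]
    have hle : R * ‖y‖⁻¹ ≤ 1 := by
      rw [mul_inv_le_iff₀ hy0, one_mul]; exact hy.le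
    rw [abs_of_nonneg (by linarith), sub_mul, one_mul, mul_assoc,
      inv_mul_cancel₀ (ne_of_gt hy0), mul_one]
  calc ‖x - (R * ‖y‖⁻¹) • y‖ ≤ ‖x - y‖ + ‖y - (R * ‖y‖⁻¹) • y‖ := by
        have := norm_sub_le_norm_sub_add_norm_sub x y ((R * ‖y‖⁻¹) • y)
        linarith [norm_sub_le (x - y) ((R * ‖y‖⁻¹) • y - y)]
    _ = ‖x - y‖ + (‖y‖ - R) := by rw [h1]
    _ ≤ ‖x - y‖ + (‖y‖ - ‖x‖) := by linarith
    _ ≤ ‖x - y‖ + ‖y - x‖ := by linarith [norm_sub_norm_le y x]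
    _ = 2 * ‖x - y‖ := by rw [norm_sub_rev y x]; ring

lemma radProj_lip {R : ℝ} (hR : 0 ≤ R) (x y : E) :
    ‖radProj R x - radProj R y‖ ≤ 2 * ‖x - y‖ := by
  rcases le_or_gt ‖x‖ R with hx | hx
  · rcases le_or_gt ‖y‖ R with hy | hy
    · rw [radProj_eq_self hx, radProj_eq_self hy]; linarith [norm_nonneg (x - y)]
    · exact radProj_lip_aux hR hx hy
  · rcases le_or_gt ‖y‖ R with hy | hy
    · rw [norm_sub_rev, norm_sub_rev x y]; exact radProj_lip_aux hR hy hx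
    · have hx0 : 0 < ‖x‖ := lt_of_le_of_lt hR hx
      have hy0 : 0 < ‖y‖ := lt_of_le_of_lt hR hy
      rw [radProj, if_neg (not_le.mpr hx), radProj, if_neg (not_le.mpr hy)]
      have key : (R * ‖x‖⁻¹) • x - (R * ‖y‖⁻¹) • y
          = (R * ‖x‖⁻¹) • (x - y) + ((R * ‖x‖⁻¹) - (R * ‖y‖⁻¹)) • y := by
        rw [smul_sub, sub_smul]; abel
      rw [key]
      have h2 : ‖(R * ‖x‖⁻¹) • (x - y)‖ ≤ ‖x - y‖ := by
        rw [norm_smul, Real.norm_eq_abs, abs_of_nonneg (by positivity)]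
        have : R * ‖x‖⁻¹ ≤ 1 := by rw [mul_inv_le_iff₀ hx0, one_mul]; exact hx.le
        nlinarith [norm_nonneg (x - y)]
      have h3 : ‖((R * ‖x‖⁻¹) - (R * ‖y‖⁻¹)) • y‖ ≤ ‖x - y‖ := by
        rw [norm_smul, Real.norm_eq_abs]
        have e1 : (R * ‖x‖⁻¹) - (R * ‖y‖⁻¹) = R * ((‖y‖ - ‖x‖) * (‖x‖⁻¹ * ‖y‖⁻¹)) := by
          field_simp
        rw [e1, abs_mul, abs_of_nonneg hR, abs_mul]
        have h4 : |‖y‖ - ‖x‖| ≤ ‖x - y‖ := by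
          rw [abs_sub_comm]; exact abs_norm_sub_norm_le x y
        have h5 : |‖x‖⁻¹ * ‖y‖⁻¹| = ‖x‖⁻¹ * ‖y‖⁻¹ := abs_of_nonneg (by positivity)
        rw [h5]
        have h6 : R * (|‖y‖ - ‖x‖| * (‖x‖⁻¹ * ‖y‖⁻¹)) * ‖y‖
            = (R * ‖x‖⁻¹) * |‖y‖ - ‖x‖| * (‖y‖⁻¹ * ‖y‖) := by ring
        rw [h6, inv_mul_cancel₀ (ne_of_gt hy0), mul_one]
        have : R * ‖x‖⁻¹ ≤ 1 := by rw [mul_inv_le_iff₀ hx0, one_mul]; exact hx.le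
        nlinarith [abs_nonneg (‖y‖ - ‖x‖), norm_nonneg (x - y)]
      calc ‖(R * ‖x‖⁻¹) • (x - y) + ((R * ‖x‖⁻¹) - (R * ‖y‖⁻¹)) • y‖
          ≤ ‖(R * ‖x‖⁻¹) • (x - y)‖ + ‖((R * ‖x‖⁻¹) - (R * ‖y‖⁻¹)) • y‖ := norm_add_le _ _
        _ ≤ 2 * ‖x - y‖ := by linarith

lemma radProj_continuous {R : ℝ} (hR : 0 ≤ R) : Continuous (radProj R : E → E) := by
  refine LipschitzWith.continuous (K := 2) (LipschitzWith.of_dist_le_mul fun x y => ?_)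
  rw [dist_eq_norm, dist_eq_norm]
  simpa using radProj_lip hR x y

end aux

section master
variable {E : Type*} [NormedAddCommGroup E] [NormedSpace ℝ E] [FiniteDimensional ℝ E]
  [MeasurableSpace E] [BorelSpace E]

/-- Chain rule for primitives of integrable functions composed with `C¹` maps. -/
lemma master {c d : ℝ} (hcd : c ≤ d) {h : ℝ → E} (hh : IntegrableOn h (Icc c d))
    {x₀ : E} {Y : ℝ → E} (hY : ∀ t ∈ Icc c d, Y t = x₀ + ∫ s in c..t, h s)
    {Φ : E → ℝ} (hΦ : ContDiff ℝ 1 Φ) {t : ℝ} (ht : t ∈ Icc c d) :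
    IntervalIntegrable (fun s => fderiv ℝ Φ (Y s) (h s)) volume c t ∧
      Φ (Y t) - Φ x₀ = ∫ s in c..t, fderiv ℝ Φ (Y s) (h s) := by
  classical
  have hct : c ≤ t := ht.1
  set h' : ℝ → E := (Icc c d).indicator h with hh'def
  have hh' : Integrable h' volume := (integrable_indicator_iff measurableSet_Icc).mpr hh
  have hinth' : ∀ u v : ℝ, IntervalIntegrable h' volume u v := fun u v => hh'.intervalIntegrable
  set Z : ℝ → E := fun s => x₀ + ∫ r in c..s, h' r with hZdef
  have hZcont : Continuous Z :=
    continuous_const.add (intervalIntegral.continuous_primitive hinth' c)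
  have hYZ : ∀ s ∈ Icc c d, Y s = Z s := by
    intro s hs
    rw [hY s hs, hZdef]
    simp only
    congr 1
    refine (intervalIntegral.integral_congr fun r hr => ?_)
    rw [uIcc_of_le hs.1] at hr
    have hrd : r ∈ Icc c d := ⟨hr.1, le_trans hr.2 hs.2⟩
    exact (Set.indicator_of_mem hrd h).symm
  set nh : ℝ := ∫ r, ‖h' r‖ with hnh
  have hnh0 : 0 ≤ nh := by rw [hnh]; exact integral_nonneg fun r => norm_nonneg _
  have primbound : ∀ (f : ℝ → E), Integrable f volume → ∀ u v : ℝ,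
      ‖∫ r in u..v, f r‖ ≤ ∫ r, ‖f r‖ := by
    intro f hf u v
    refine le_trans intervalIntegral.norm_integral_le_integral_norm_uIoc ?_
    exact setIntegral_le_integral hf.norm (Filter.Eventually.of_forall fun r => norm_nonneg _)
  have hZball : ∀ s, ‖Z s‖ ≤ ‖x₀‖ + nh := by
    intro s
    calc ‖Z s‖ ≤ ‖x₀‖ + ‖∫ r in c..s, h' r‖ := norm_add_le _ _
      _ ≤ ‖x₀‖ + nh := by linarith [primbound h' hh' c s]
  set ρ : ℝ := ‖x₀‖ + nh + 1 with hρ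
  have hρ0 : 0 < ρ := by positivity
  set K : Set E := closedBall (0:E) ρ with hK
  have hKcomp : IsCompact K := isCompact_closedBall _ _
  have hKconv : Convex ℝ K := convex_closedBall _ _
  have hZK : ∀ s, Z s ∈ K := fun s => by
    rw [hK, mem_closedBall_zero_iff]; linarith [hZball s]
  set A : E → (E →L[ℝ] ℝ) := fderiv ℝ Φ with hA
  have hAcont : Continuous A := hΦ.continuous_fderiv one_ne_zero
  obtain ⟨xM, hxM, hxMmax⟩ := hKcomp.exists_isMaxOn (nonempty_closedBall.mpr hρ0.le)
    ((continuous_norm.comp hAcont).continuousOn (s := K))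
  set M : ℝ := ‖A xM‖ with hM
  have hM0 : 0 ≤ M := norm_nonneg _
  have hMb : ∀ x ∈ K, ‖A x‖ ≤ M := hxMmax
  have haesm : AEStronglyMeasurable (fun s => (A (Z s)) (h' s)) volume :=
    isBoundedBilinearMap_apply.continuous.comp_aestronglyMeasurable
      (((hAcont.comp hZcont).aestronglyMeasurable).prodMk hh'.aestronglyMeasurable)
  have hint' : Integrable (fun s => (A (Z s)) (h' s)) volume := by
    refine Integrable.mono' (hh'.norm.const_mul M) haesm ?_
    refine Filter.Eventually.of_forall fun s => ?_
    calc ‖(A (Z s)) (h' s)‖ ≤ ‖A (Z s)‖ * ‖h' s‖ := ContinuousLinearMap.le_opNorm _ _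
      _ ≤ M * ‖h' s‖ := mul_le_mul_of_nonneg_right (hMb _ (hZK s)) (norm_nonneg _)
  have hcongr : EqOn (fun s => (A (Y s)) (h s)) (fun s => (A (Z s)) (h' s)) (uIcc c t) := by
    intro s hs
    rw [uIcc_of_le hct] at hs
    have hs' : s ∈ Icc c d := ⟨hs.1, le_trans hs.2 ht.2⟩
    simp only
    rw [hYZ s hs', hh'def, Set.indicator_of_mem hs']
  have hII : IntervalIntegrable (fun s => (A (Y s)) (h s)) volume c t := by
    rw [intervalIntegrable_iff_integrableOn_Ioc_of_le hct]
    refine (hint'.integrableOn (s := Ioc c t)).congr_fun ?_ measurableSet_Ioc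
    intro s hs
    exact (hcongr (by rw [uIcc_of_le hct]; exact Ioc_subset_Icc_self hs)).symm
  refine ⟨hII, ?_⟩
  rw [intervalIntegral.integral_congr hcongr]
  refine eq_of_forall_dist_le fun ε hε => ?_
  set ε₁ : ℝ := ε / (2 * (nh + 1)) with hε₁
  have hε₁0 : 0 < ε₁ := by positivity
  obtain ⟨η, hη0, hηuc⟩ := Metric.uniformContinuousOn_iff.mp
    (hKcomp.uniformContinuousOn_of_continuous hAcont.continuousOn) ε₁ hε₁0
  set δ : ℝ := min (min 1 (η/2)) (ε/(4*(M+1))) with hδ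
  have hδ0 : 0 < δ := lt_min (lt_min one_pos (by positivity)) (by positivity)
  have hδ1 : δ ≤ 1 := le_trans (min_le_left _ _) (min_le_left _ _)
  have hδη : δ < η := lt_of_le_of_lt (le_trans (min_le_left _ _) (min_le_right _ _)) (by linarith)
  have hδε : δ ≤ ε/(4*(M+1)) := min_le_right _ _
  obtain ⟨g, hgsupp, hgint, hgcont, hgI⟩ := hh'.exists_hasCompactSupport_integral_sub_le hδ0
  have hsub : Integrable (fun s : ℝ => g s - h' s) volume := hgI.sub hh'
  set Z' : ℝ → E := fun s => x₀ + ∫ r in c..s, g r with hZ'def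
  have hgII : ∀ u v : ℝ, IntervalIntegrable g volume u v := fun u v => hgI.intervalIntegrable
  have hZ'cont : Continuous Z' :=
    continuous_const.add (intervalIntegral.continuous_primitive hgII c)
  have hgh' : (∫ r, ‖g r - h' r‖) ≤ δ := by
    refine le_trans (le_of_eq ?_) hgint
    congr 1; funext r; rw [norm_sub_rev]
  have hZZ' : ∀ s, ‖Z' s - Z s‖ ≤ δ := by
    intro s
    have he : Z' s - Z s = ∫ r in c..s, (g r - h' r) := by
      rw [hZ'def, hZdef]
      simp only [add_sub_add_left_eq_sub]
      rw [intervalIntegral.integral_sub (hgII c s) (hinth' c s)]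
    rw [he]
    exact le_trans (primbound _ hsub c s) hgh'
  have hZ'K : ∀ s, Z' s ∈ K := by
    intro s
    rw [hK, mem_closedBall_zero_iff]
    have h2 : ‖Z' s‖ ≤ ‖Z' s - Z s‖ + ‖Z s‖ := by
      have := norm_add_le (Z' s - Z s) (Z s)
      rwa [sub_add_cancel] at this
    linarith [hZZ' s, hZball s]
  have hdZ' : ∀ s : ℝ, HasDerivAt Z' (g s) s := by
    intro s
    refine HasDerivAt.const_add x₀ ?_
    exact intervalIntegral.integral_hasDerivAt_right (hgII c s)
      (hgcont.stronglyMeasurableAtFilter volume (nhds s)) hgcont.continuousAt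
  have hΦdiff : Differentiable ℝ Φ := hΦ.differentiable one_ne_zero
  have hdcomp : ∀ s : ℝ, HasDerivAt (fun u => Φ (Z' u)) ((A (Z' s)) (g s)) s := fun s =>
    ((hΦdiff (Z' s)).hasFDerivAt.comp_hasDerivAt s (hdZ' s))
  have hcont3 : Continuous (fun s => (A (Z' s)) (g s)) :=
    isBoundedBilinearMap_apply.continuous.comp ((hAcont.comp hZ'cont).prodMk hgcont)
  have hFTC : ∫ s in c..t, (A (Z' s)) (g s) = Φ (Z' t) - Φ (Z' c) :=
    intervalIntegral.integral_eq_sub_of_hasDerivAt (fun s _ => hdcomp s)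
      (hcont3.intervalIntegrable c t)
  have hZ'c : Z' c = x₀ := by rw [hZ'def]; simp
  have hΦlip : ∀ x ∈ K, ∀ y ∈ K, ‖Φ y - Φ x‖ ≤ M * ‖y - x‖ := fun x hx y hy =>
    hKconv.norm_image_sub_le_of_norm_fderiv_le (fun z _ => hΦdiff z) hMb hx hy
  have hptwise : ∀ s ∈ Set.uIoc c t, ‖(A (Z' s)) (g s) - (A (Z s)) (h' s)‖
      ≤ M * ‖g s - h' s‖ + ε₁ * ‖h' s‖ := by
    intro s _
    have e : (A (Z' s)) (g s) - (A (Z s)) (h' s)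
        = (A (Z' s)) (g s - h' s) + ((A (Z' s)) - (A (Z s))) (h' s) := by
      simp only [ContinuousLinearMap.sub_apply, map_sub]; abel
    rw [e]
    have t1 : ‖(A (Z' s)) (g s - h' s)‖ ≤ M * ‖g s - h' s‖ :=
      le_trans (ContinuousLinearMap.le_opNorm _ _)
        (mul_le_mul_of_nonneg_right (hMb _ (hZ'K s)) (norm_nonneg _))
    have t2 : ‖((A (Z' s)) - (A (Z s))) (h' s)‖ ≤ ε₁ * ‖h' s‖ := by
      refine le_trans (ContinuousLinearMap.le_opNorm _ _)
        (mul_le_mul_of_nonneg_right ?_ (norm_nonneg _))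
      have hd : dist (Z' s) (Z s) < η := by
        rw [dist_eq_norm]; exact lt_of_le_of_lt (hZZ' s) hδη
      have := hηuc (Z' s) (hZ'K s) (Z s) (hZK s) hd
      rw [dist_eq_norm] at this
      exact this.le
    exact le_trans (norm_add_le _ _) (by linarith)
  have hdom : IntervalIntegrable (fun s => M * ‖g s - h' s‖ + ε₁ * ‖h' s‖) volume c t :=
    ((hsub.norm.const_mul M).add (hh'.norm.const_mul ε₁)).intervalIntegrable
  have hTerm3 : ‖(∫ s in c..t, (A (Z' s)) (g s)) - ∫ s in c..t, (A (Z s)) (h' s)‖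
      ≤ M * δ + ε/2 := by
    rw [← intervalIntegral.integral_sub (hcont3.intervalIntegrable c t)
      (hint'.intervalIntegrable)]
    refine le_trans (intervalIntegral.norm_integral_le_abs_of_norm_le
      (ae_restrict_of_forall_mem measurableSet_uIoc hptwise) hdom) ?_
    have hnonneg : ∀ s : ℝ, 0 ≤ M * ‖g s - h' s‖ + ε₁ * ‖h' s‖ := fun s => by positivity
    have heq : (∫ s in c..t, (M * ‖g s - h' s‖ + ε₁ * ‖h' s‖))
        = ∫ s in Ioc c t, (M * ‖g s - h' s‖ + ε₁ * ‖h' s‖) :=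
      intervalIntegral.integral_of_le hct
    have hnn : 0 ≤ ∫ s in Ioc c t, (M * ‖g s - h' s‖ + ε₁ * ‖h' s‖) :=
      setIntegral_nonneg measurableSet_Ioc fun s _ => hnonneg s
    have hle : (∫ s in Ioc c t, (M * ‖g s - h' s‖ + ε₁ * ‖h' s‖))
        ≤ ∫ s, (M * ‖g s - h' s‖ + ε₁ * ‖h' s‖) :=
      setIntegral_le_integral ((hsub.norm.const_mul M).add (hh'.norm.const_mul ε₁))
        (Filter.Eventually.of_forall hnonneg)
    have hval : (∫ s, (M * ‖g s - h' s‖ + ε₁ * ‖h' s‖))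
        = M * (∫ s, ‖g s - h' s‖) + ε₁ * nh := by
      rw [integral_add (hsub.norm.const_mul M) (hh'.norm.const_mul ε₁),
        integral_const_mul, integral_const_mul]
    have hb1 : M * (∫ s, ‖g s - h' s‖) ≤ M * δ :=
      mul_le_mul_of_nonneg_left hgh' hM0
    have hb2 : ε₁ * nh ≤ ε / 2 := by
      rw [hε₁]
      rw [div_mul_eq_mul_div, div_le_div_iff₀ (by positivity) (by norm_num)]
      nlinarith
    rw [heq, abs_of_nonneg hnn]
    linarith
  rw [Real.dist_eq]
  have hYtZ : Y t = Z t := hYZ t ht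
  have hkey : Φ (Y t) - Φ x₀ - (∫ s in c..t, (A (Z s)) (h' s))
      = (Φ (Z t) - Φ (Z' t))
        + ((∫ s in c..t, (A (Z' s)) (g s)) - ∫ s in c..t, (A (Z s)) (h' s)) := by
    rw [hYtZ, hFTC, hZ'c]; ring
  rw [hkey]
  have hT1 : |Φ (Z t) - Φ (Z' t)| ≤ M * δ := by
    have := hΦlip (Z' t) (hZ'K t) (Z t) (hZK t)
    rw [Real.norm_eq_abs] at this
    refine le_trans this ?_
    have : ‖Z t - Z' t‖ ≤ δ := by rw [norm_sub_rev]; exact hZZ' t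
    nlinarith
  have : |(Φ (Z t) - Φ (Z' t))
      + ((∫ s in c..t, (A (Z' s)) (g s)) - ∫ s in c..t, (A (Z s)) (h' s))|
      ≤ M * δ + (M * δ + ε/2) := by
    refine le_trans (abs_add_le _ _) ?_
    have h3 := hTerm3
    rw [Real.norm_eq_abs] at h3
    linarith
  refine le_trans this ?_
  have hMδ : M * δ ≤ ε / 4 := by
    have h1 : M * δ ≤ M * (ε / (4 * (M + 1))) := mul_le_mul_of_nonneg_left hδε hM0
    have h2 : M * (ε / (4 * (M + 1))) ≤ ε / 4 := by
      rw [mul_div_assoc', div_le_div_iff₀ (by positivity) (by norm_num : (0:ℝ) < 4)]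
      nlinarith
    linarith
  linarith

/-- scalar version of `master`, with `deriv` data. -/
lemma master_real {c d : ℝ} (hcd : c ≤ d) {h : ℝ → ℝ} (hh : IntegrableOn h (Icc c d))
    {x₀ : ℝ} {Y : ℝ → ℝ} (hY : ∀ t ∈ Icc c d, Y t = x₀ + ∫ s in c..t, h s)
    {Φ Φ' : ℝ → ℝ} (hΦ : ∀ x, HasDerivAt Φ (Φ' x) x) (hΦ' : Continuous Φ')
    {t : ℝ} (ht : t ∈ Icc c d) :
    IntervalIntegrable (fun s => Φ' (Y s) * h s) volume c t ∧
      Φ (Y t) - Φ x₀ = ∫ s in c..t, Φ' (Y s) * h s := by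
  have hderiv : deriv Φ = Φ' := funext fun x => (hΦ x).deriv
  have hdiff : Differentiable ℝ Φ := fun x => (hΦ x).differentiableAt
  have hCD : ContDiff ℝ 1 Φ := by
    rw [contDiff_one_iff_deriv]
    exact ⟨hdiff, hderiv ▸ hΦ'⟩
  have hfd : ∀ x v : ℝ, fderiv ℝ Φ x v = Φ' x * v := by
    intro x v
    rw [(hΦ x).hasFDerivAt.fderiv]
    simp [ContinuousLinearMap.smulRight_apply, smul_eq_mul]
    ring
  have H := master hcd hh hY hCD ht
  have hfun : (fun s => Φ' (Y s) * h s) = fun s => fderiv ℝ Φ (Y s) (h s) :=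
    funext fun s => (hfd (Y s) (h s)).symm
  rw [hfun]
  exact H

/-- Grönwall inequality with integrable coefficient. -/
lemma gronwall {c d : ℝ} (hcd : c ≤ d) {A : ℝ → ℝ} (hA : IntegrableOn A (Icc c d))
    (hA0 : ∀ t, 0 ≤ A t) {u : ℝ → ℝ} (hu : ContinuousOn u (Icc c d)) (hu0 : ∀ t, 0 ≤ u t)
    {C : ℝ} (hC : 0 ≤ C)
    (hle : ∀ t ∈ Icc c d, u t ≤ C + ∫ s in c..t, A s * u s) :
    ∀ t ∈ Icc c d, u t ≤ 2 * C * Real.exp (2 * ∫ s in Icc c d, A s) := by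
  set At : ℝ → ℝ := (Icc c d).indicator A with hAtdef
  have hAtI : Integrable At volume := (integrable_indicator_iff measurableSet_Icc).mpr hA
  have hAt0 : ∀ s, 0 ≤ At s := fun s => Set.indicator_nonneg (fun r _ => hA0 r) s
  set L : ℝ → ℝ := fun t => ∫ s in c..t, At s with hLdef
  have hLY : ∀ t ∈ Icc c d, L t = 0 + ∫ s in c..t, At s := fun t _ => by rw [hLdef]; simp
  have hL0 : ∀ t, t ∈ Icc c d → 0 ≤ L t := fun t htm => by
    rw [hLdef]
    exact intervalIntegral.integral_nonneg htm.1 (fun s _ => hAt0 s)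
  have hLcont : Continuous L :=
    intervalIntegral.continuous_primitive (fun u v => hAtI.intervalIntegrable) c
  have hLd : ∀ t ∈ Icc c d, L t ≤ ∫ s in Icc c d, A s := by
    intro t htm
    have h1 : L t = ∫ s in Ioc c t, At s := intervalIntegral.integral_of_le htm.1
    have h2 : (∫ s in Ioc c t, At s) ≤ ∫ s, At s :=
      setIntegral_le_integral hAtI (Filter.Eventually.of_forall hAt0)
    have h3 : (∫ s, At s) = ∫ s in Icc c d, A s := integral_indicator measurableSet_Icc
    rw [h1]; rw [h3] at h2; exact h2
  have hΦd : ∀ x : ℝ, HasDerivAt (fun y : ℝ => Real.exp (2*y)/2) (Real.exp (2*x)) x := by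
    intro x
    have h1 : HasDerivAt (fun y : ℝ => 2*y) 2 x := by
      simpa using (hasDerivAt_id x).const_mul (2:ℝ)
    have h2 := (Real.hasDerivAt_exp (2*x)).comp x h1
    have h3 := h2.div_const 2
    have : Real.exp (2*x) * 2 / 2 = Real.exp (2*x) := by ring
    rw [this] at h3
    exact h3
  obtain ⟨t₀, ht₀m, ht₀max⟩ := (isCompact_Icc (a:=c) (b:=d)).exists_isMaxOn
    (nonempty_Icc.mpr hcd)
    (hu.mul (((Real.continuous_exp.comp ((continuous_const.mul hLcont).neg))).continuousOn))
  set m : ℝ := u t₀ * Real.exp (-(2 * L t₀)) with hm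
  set M0 : ℝ := max m 0 with hM0def
  have hM00 : 0 ≤ M0 := le_max_right _ _
  have hub : ∀ s ∈ Icc c d, u s ≤ M0 * Real.exp (2 * L s) := by
    intro s hs
    have h1 : u s * Real.exp (-(2 * L s)) ≤ m := ht₀max hs
    have h2 : u s * Real.exp (-(2*L s)) * Real.exp (2*L s) ≤ m * Real.exp (2*L s) :=
      mul_le_mul_of_nonneg_right h1 (Real.exp_pos _).le
    rw [mul_assoc, ← Real.exp_add, neg_add_cancel, Real.exp_zero, mul_one] at h2
    exact le_trans h2 (mul_le_mul_of_nonneg_right (le_max_left _ _) (Real.exp_pos _).le)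
  have hmaster := master_real hcd (hAtI.integrableOn) hLY hΦd
    (Real.continuous_exp.comp (continuous_const.mul continuous_id)) ht₀m
  -- integrability pieces on [c, t₀]
  have hsub1 : Ioc c t₀ ⊆ Icc c d := fun r hr => ⟨hr.1.le, le_trans hr.2 ht₀m.2⟩
  have hII1 : IntervalIntegrable (fun s => A s * u s) volume c t₀ := by
    rw [intervalIntegrable_iff_integrableOn_Ioc_of_le ht₀m.1]
    exact (hA.mul_continuousOn hu isCompact_Icc).mono_set hsub1
  have hII2 : IntervalIntegrable (fun s => A s * (M0 * Real.exp (2 * L s))) volume c t₀ := by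
    rw [intervalIntegrable_iff_integrableOn_Ioc_of_le ht₀m.1]
    refine (hA.mul_continuousOn ?_ isCompact_Icc).mono_set hsub1
    exact (continuous_const.mul (Real.continuous_exp.comp (continuous_const.mul hLcont))).continuousOn
  have hstep1 : (∫ s in c..t₀, A s * u s) ≤ ∫ s in c..t₀, A s * (M0 * Real.exp (2 * L s)) := by
    refine intervalIntegral.integral_mono_on ht₀m.1 hII1 hII2 fun s hs => ?_
    have hs' : s ∈ Icc c d := ⟨hs.1, le_trans hs.2 ht₀m.2⟩
    exact mul_le_mul_of_nonneg_left (hub s hs') (hA0 s)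
  have hstep2 : (∫ s in c..t₀, A s * (M0 * Real.exp (2 * L s)))
      = M0 * ∫ s in c..t₀, Real.exp (2 * L s) * At s := by
    rw [← intervalIntegral.integral_const_mul]
    refine intervalIntegral.integral_congr fun s hs => ?_
    rw [uIcc_of_le ht₀m.1] at hs
    have hs' : s ∈ Icc c d := ⟨hs.1, le_trans hs.2 ht₀m.2⟩
    show A s * (M0 * Real.exp (2 * L s)) = M0 * (Real.exp (2 * L s) * At s)
    rw [hAtdef, Set.indicator_of_mem hs']
    ring
  have hmval : (∫ s in c..t₀, Real.exp (2 * L s) * At s)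
      = Real.exp (2 * L t₀)/2 - 1/2 := by
    have h := hmaster.2
    simp only [mul_zero, Real.exp_zero] at h
    linarith [h]
  have hut₀ : u t₀ ≤ C + M0 * (Real.exp (2 * L t₀)/2 - 1/2) := by
    have h1 := hle t₀ ht₀m
    rw [hstep2, hmval] at hstep1
    linarith
  have hmle : m ≤ C + M0 / 2 := by
    have hE : Real.exp (2 * L t₀) * Real.exp (-(2 * L t₀)) = 1 := by
      rw [← Real.exp_add]; norm_num
    have hE0 : 0 < Real.exp (-(2 * L t₀)) := Real.exp_pos _
    have hE1 : Real.exp (-(2 * L t₀)) ≤ 1 := by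
      rw [Real.exp_le_one_iff]
      have := hL0 t₀ ht₀m; linarith
    have h2 : u t₀ * Real.exp (-(2 * L t₀))
        ≤ (C + M0 * (Real.exp (2 * L t₀)/2 - 1/2)) * Real.exp (-(2 * L t₀)) :=
      mul_le_mul_of_nonneg_right hut₀ hE0.le
    rw [hm]
    refine le_trans h2 ?_
    have expand : (C + M0 * (Real.exp (2 * L t₀)/2 - 1/2)) * Real.exp (-(2 * L t₀))
        = C * Real.exp (-(2 * L t₀)) + M0/2 * (Real.exp (2 * L t₀) * Real.exp (-(2 * L t₀)))
          - M0/2 * Real.exp (-(2 * L t₀)) := by ring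
    rw [expand, hE]
    nlinarith
  have hM02C : M0 ≤ 2 * C := by
    rcases le_total m 0 with hm0 | hm0
    · rw [hM0def, max_eq_right hm0]; linarith
    · rw [hM0def, max_eq_left hm0] at hmle ⊢
      linarith
  intro t htm
  calc u t ≤ M0 * Real.exp (2 * L t) := hub t htm
    _ ≤ 2 * C * Real.exp (2 * L t) :=
        mul_le_mul_of_nonneg_right hM02C (Real.exp_pos _).le
    _ ≤ 2 * C * Real.exp (2 * ∫ s in Icc c d, A s) := by
        refine mul_le_mul_of_nonneg_left ?_ (by linarith)
        exact Real.exp_le_exp.mpr (by linarith [hLd t htm])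

/-- A priori bound for solutions of the integral equation, from the linear growth bound. -/
lemma apriori {E : Type*} [NormedAddCommGroup E] [NormedSpace ℝ E]
    {a : ℝ} (ha : 0 ≤ a) {α : ℝ → ℝ} (hα : IntegrableOn α (Icc 0 a)) (hα0 : ∀ t, 0 ≤ α t)
    {c d : ℝ} (hcd : c ≤ d) (hsub : Icc c d ⊆ Icc 0 a)
    {f : ℝ → E} (hf : IntegrableOn f (Icc c d))
    {x₀ : E} {w : ℝ → E} (hw : ContinuousOn w (Icc c d))
    (hsol : ∀ t ∈ Icc c d, w t = x₀ + ∫ s in c..t, f s)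
    (hfb : ∀ s ∈ Icc c d, ‖f s‖ ≤ α s * (1 + ‖w s‖) + 1) :
    ∀ t ∈ Icc c d, ‖w t‖
      ≤ 2 * (‖x₀‖ + (∫ s in Icc 0 a, α s) + a) * Real.exp (2 * ∫ s in Icc 0 a, α s) := by
  set A : ℝ := ∫ s in Icc 0 a, α s with hA
  have hA0 : 0 ≤ A := setIntegral_nonneg measurableSet_Icc fun s _ => hα0 s
  set C : ℝ := ‖x₀‖ + A + a with hC
  have hC0 : 0 ≤ C := by positivity
  have hαcd : IntegrableOn α (Icc c d) := hα.mono_set hsub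
  -- integrability of the comparison integrands
  have hαu : IntegrableOn (fun s => α s * ‖w s‖) (Icc c d) :=
    hαcd.mul_continuousOn hw.norm isCompact_Icc
  have hconst : IntegrableOn (fun _ : ℝ => (1:ℝ)) (Icc c d) :=
    integrableOn_const measure_Icc_lt_top.ne
  have hrhs : IntegrableOn (fun s => α s * (1 + ‖w s‖) + 1) (Icc c d) :=
    (hαcd.mul_continuousOn (continuousOn_const.add hw.norm) isCompact_Icc).add hconst
  have hα1 : IntegrableOn (fun s => α s + 1) (Icc c d) := hαcd.add hconst
  have key : ∀ t ∈ Icc c d, ‖w t‖ ≤ C + ∫ s in c..t, α s * ‖w s‖ := by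
    intro t htm
    have hct : c ≤ t := htm.1
    have hsubt : Icc c t ⊆ Icc c d := Icc_subset_Icc le_rfl htm.2
    have hIocsub : Ioc c t ⊆ Icc c d := fun r hr => hsubt ⟨hr.1.le, hr.2⟩
    have hfI : IntervalIntegrable f volume c t := by
      rw [intervalIntegrable_iff_integrableOn_Ioc_of_le hct]
      exact hf.mono_set hIocsub
    have hnormle : ‖w t‖ ≤ ‖x₀‖ + ∫ s in c..t, ‖f s‖ := by
      rw [hsol t htm]
      refine le_trans (norm_add_le _ _) ?_
      exact add_le_add_right (intervalIntegral.norm_integral_le_integral_norm hct) _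
    have hmono1 : (∫ s in c..t, ‖f s‖) ≤ ∫ s in c..t, (α s * (1 + ‖w s‖) + 1) := by
      refine intervalIntegral.integral_mono_on hct hfI.norm ?_ ?_
      · rw [intervalIntegrable_iff_integrableOn_Ioc_of_le hct]
        exact hrhs.mono_set hIocsub
      · exact fun s hs => hfb s (hsubt hs)
    have hsplit : (∫ s in c..t, (α s * (1 + ‖w s‖) + 1))
        = (∫ s in c..t, (α s + 1)) + ∫ s in c..t, α s * ‖w s‖ := by
      rw [← intervalIntegral.integral_add]
      · exact intervalIntegral.integral_congr fun s _ => by ring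
      · rw [intervalIntegrable_iff_integrableOn_Ioc_of_le hct]
        exact hα1.mono_set hIocsub
      · rw [intervalIntegrable_iff_integrableOn_Ioc_of_le hct]
        exact hαu.mono_set hIocsub
    have hfirst : (∫ s in c..t, (α s + 1)) ≤ A + a := by
      have h1 : (∫ s in c..t, (α s + 1)) = (∫ s in c..t, α s) + (t - c) := by
        rw [intervalIntegral.integral_add]
        · congr 1
          simp [intervalIntegral.integral_const]
        · rw [intervalIntegrable_iff_integrableOn_Ioc_of_le hct]
          exact hαcd.mono_set hIocsub
        · exact intervalIntegrable_const
      have h2 : (∫ s in c..t, α s) ≤ A := by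
        rw [intervalIntegral.integral_of_le hct, hA]
        refine setIntegral_mono_set hα (Filter.Eventually.of_forall fun s => hα0 s)
          (HasSubset.Subset.eventuallyLE ?_)
        intro r hr
        exact hsub (hIocsub hr)
      have h3 : t - c ≤ a := by
        have h4 := hsub htm
        have h5 := hsub ⟨le_rfl, hcd⟩
        have := h4.2; have := h5.1
        linarith
      linarith
    linarith
  have := gronwall hcd hαcd hα0 hw.norm (fun t => norm_nonneg (w t)) hC0 key
  intro t htm
  refine le_trans (this t htm) ?_
  have hmono2 : (∫ s in Icc c d, α s) ≤ A := by
    rw [hA]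
    exact setIntegral_mono_set hα (Filter.Eventually.of_forall fun s => hα0 s)
      (HasSubset.Subset.eventuallyLE hsub)
  have hexp : Real.exp (2 * ∫ s in Icc c d, α s) ≤ Real.exp (2 * A) :=
    Real.exp_le_exp.mpr (by linarith)
  have h2C : (0:ℝ) ≤ 2 * C := by linarith
  calc 2 * C * Real.exp (2 * ∫ s in Icc c d, α s) ≤ 2 * C * Real.exp (2 * A) :=
        mul_le_mul_of_nonneg_left hexp h2C
    _ = 2 * (‖x₀‖ + A + a) * Real.exp (2 * A) := by rw [hC]

/-- Existence and uniqueness for the integral equation with a Carathéodory field that is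
globally Lipschitz with integrable constant and dominated by an integrable bound. -/
lemma EU {E : Type*} [NormedAddCommGroup E] [NormedSpace ℝ E] [FiniteDimensional ℝ E]
    [MeasurableSpace E] [BorelSpace E] [SecondCountableTopology E]
    {c d : ℝ} (hcd : c ≤ d) {F : ℝ → E → E} {β Λ : ℝ → ℝ}
    (hβ : IntegrableOn β (Icc c d)) (hΛ : IntegrableOn Λ (Icc c d)) (hΛ0 : ∀ t, 0 ≤ Λ t)
    (hFm : ∀ x, Measurable (fun t => F t x)) (hFc : ∀ t, Continuous (F t))
    (hFb : ∀ t ∈ Icc c d, ∀ x : E, ‖F t x‖ ≤ β t)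
    (hFl : ∀ t ∈ Icc c d, ∀ x x' : E, ‖F t x - F t x'‖ ≤ Λ t * ‖x - x'‖)
    (x₀ : E) :
    ∃ Y : ℝ → E, Continuous Y ∧ (∀ t ∈ Icc c d, Y t = x₀ + ∫ s in c..t, F s (Y s)) ∧
      ∀ Z : ℝ → E, ContinuousOn Z (Icc c d) →
        (∀ t ∈ Icc c d, Z t = x₀ + ∫ s in c..t, F s (Z s)) → EqOn Z Y (Icc c d) := by
  classical
  haveI : Nonempty (Icc c d) := (nonempty_Icc.mpr hcd).to_subtype
  haveI : Nonempty C(Icc c d, E) := ⟨ContinuousMap.const _ x₀⟩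
  -- joint measurability (Carathéodory)
  have hjoint : Measurable (Function.uncurry fun (x : E) (t : ℝ) => F t x) :=
    measurable_uncurry_of_continuous_of_measurable (fun t => hFc t) hFm
  have hcomp : ∀ (U : ℝ → E), Continuous U → Measurable (fun s => F s (U s)) := by
    intro U hU
    have he : (fun s => F s (U s))
        = (Function.uncurry fun (x : E) (t : ℝ) => F t x) ∘ (fun s => (U s, s)) := rfl
    rw [he]
    exact hjoint.comp (hU.measurable.prodMk measurable_id)
  -- indicator versions
  set βt : ℝ → ℝ := (Icc c d).indicator β with hβtdef
  have hβtI : Integrable βt volume := (integrable_indicator_iff measurableSet_Icc).mpr hβ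
  set Λt : ℝ → ℝ := (Icc c d).indicator Λ with hΛtdef
  have hΛtI : Integrable Λt volume := (integrable_indicator_iff measurableSet_Icc).mpr hΛ
  have hΛt0 : ∀ s, 0 ≤ Λt s := fun s => Set.indicator_nonneg (fun r _ => hΛ0 r) s
  set L : ℝ → ℝ := fun t => ∫ s in c..t, Λt s with hLdef
  have hLY : ∀ t ∈ Icc c d, L t = 0 + ∫ s in c..t, Λt s := fun t _ => by rw [hLdef]; simp
  have hL0 : ∀ t, t ∈ Icc c d → 0 ≤ L t := fun t htm => by
    rw [hLdef]
    exact intervalIntegral.integral_nonneg htm.1 (fun s _ => hΛt0 s)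
  have hLd : ∀ t ∈ Icc c d, L t ≤ L d := by
    intro t htm
    have h1 : L t = ∫ s in Ioc c t, Λt s := intervalIntegral.integral_of_le htm.1
    have h2 : L d = ∫ s in Ioc c d, Λt s := intervalIntegral.integral_of_le hcd
    rw [h1, h2]
    refine setIntegral_mono_set hΛtI.integrableOn
      (Filter.Eventually.of_forall hΛt0) (HasSubset.Subset.eventuallyLE ?_)
    exact Ioc_subset_Ioc le_rfl htm.2
  -- the Picard operator
  set mkG : C(Icc c d, E) → ℝ → E := fun u =>
    (Icc c d).indicator (fun r => F r (u (projIcc c d hcd r))) with hmkG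
  have hGmeas : ∀ u : C(Icc c d, E), Measurable (mkG u) := fun u =>
    (hcomp _ (u.continuous.comp continuous_projIcc)).indicator measurableSet_Icc
  have hGbd : ∀ u s, ‖mkG u s‖ ≤ βt s := by
    intro u s
    by_cases hs : s ∈ Icc c d
    · simp only [hmkG, hβtdef, Set.indicator_of_mem hs]
      exact hFb s hs _
    · simp only [hmkG, hβtdef, Set.indicator_of_notMem hs]
      simp
  have hGint : ∀ u, Integrable (mkG u) volume := fun u =>
    hβtI.mono' (hGmeas u).aestronglyMeasurable (Filter.Eventually.of_forall (hGbd u))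
  set T : C(Icc c d, E) → C(Icc c d, E) := fun u =>
    ⟨fun t => x₀ + ∫ s in c..(t:ℝ), mkG u s,
     (continuous_const.add (intervalIntegral.continuous_primitive
       (fun a b => (hGint u).intervalIntegrable) c)).comp continuous_subtype_val⟩ with hT
  have hTapply : ∀ u (t : Icc c d), T u t = x₀ + ∫ s in c..(t:ℝ), mkG u s := fun u t => rfl
  -- derivative data for powers
  have hΦd : ∀ n : ℕ, ∀ x : ℝ,
      HasDerivAt (fun y : ℝ => y^(n+1)/((n+1).factorial : ℝ)) (x^n/(n.factorial : ℝ)) x := by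
    intro n x
    have h1 := (hasDerivAt_pow (n+1) x).div_const (((n+1).factorial : ℕ) : ℝ)
    have he : ((n+1 : ℕ) : ℝ) * x^(n+1-1) / (((n+1).factorial : ℕ) : ℝ)
        = x^n/(n.factorial : ℝ) := by
      rw [Nat.add_sub_cancel, Nat.factorial_succ]
      push_cast
      have hn0 : (0:ℝ) < (n.factorial : ℝ) := by exact_mod_cast n.factorial_pos
      field_simp
    rw [he] at h1
    exact h1
  -- iterate estimate
  have hiter : ∀ n : ℕ, ∀ u v : C(Icc c d, E), ∀ t : Icc c d,
      ‖(T^[n] u) t - (T^[n] v) t‖ ≤ (L (t:ℝ))^n / (n.factorial : ℝ) * dist u v := by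
    intro n
    induction n with
    | zero =>
      intro u v t
      simp only [Function.iterate_zero_apply, pow_zero, Nat.factorial_zero, Nat.cast_one,
        div_one, one_mul]
      rw [← dist_eq_norm]
      exact ContinuousMap.dist_apply_le_dist t
    | succ n ih =>
      intro u v t
      have htm : (t:ℝ) ∈ Icc c d := t.2
      have hct : c ≤ (t:ℝ) := htm.1
      rw [Function.iterate_succ_apply', Function.iterate_succ_apply']
      rw [hTapply, hTapply]
      have hsubint : (x₀ + ∫ s in c..(t:ℝ), mkG (T^[n] u) s)
          - (x₀ + ∫ s in c..(t:ℝ), mkG (T^[n] v) s)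
          = ∫ s in c..(t:ℝ), (mkG (T^[n] u) s - mkG (T^[n] v) s) := by
        rw [intervalIntegral.integral_sub ((hGint _).intervalIntegrable)
          ((hGint _).intervalIntegrable)]
        abel
      rw [hsubint]
      have hm := master_real hcd hΛtI.integrableOn hLY (hΦd n)
        (by continuity : Continuous fun x : ℝ => x^n/(n.factorial : ℝ))  htm
      have hdom : IntervalIntegrable
          (fun s => dist u v * ((L s)^n/(n.factorial : ℝ) * Λt s)) volume c (t:ℝ) :=
        hm.1.const_mul _
      have hptw : ∀ s ∈ Set.uIoc c (t:ℝ), ‖mkG (T^[n] u) s - mkG (T^[n] v) s‖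
          ≤ dist u v * ((L s)^n/(n.factorial : ℝ) * Λt s) := by
        intro s hs
        rw [uIoc_of_le hct] at hs
        have hsm : s ∈ Icc c d := ⟨hs.1.le, le_trans hs.2 htm.2⟩
        have hproj : projIcc c d hcd s = ⟨s, hsm⟩ := projIcc_of_mem hcd hsm
        simp only [hmkG, Set.indicator_of_mem hsm]
        rw [hproj]
        refine le_trans (hFl s hsm _ _) ?_
        have hihs := ih u v ⟨s, hsm⟩
        have hΛs : Λ s = Λt s := (Set.indicator_of_mem hsm Λ).symm
        rw [hΛs]
        have h0 : 0 ≤ Λt s := hΛt0 s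
        calc Λt s * ‖(T^[n] u) ⟨s, hsm⟩ - (T^[n] v) ⟨s, hsm⟩‖
            ≤ Λt s * ((L s)^n / (n.factorial : ℝ) * dist u v) :=
              mul_le_mul_of_nonneg_left hihs h0
          _ = dist u v * ((L s)^n/(n.factorial : ℝ) * Λt s) := by ring
      refine le_trans (intervalIntegral.norm_integral_le_abs_of_norm_le
        (ae_restrict_of_forall_mem measurableSet_uIoc hptw) hdom) ?_
      have hval : (∫ s in c..(t:ℝ), dist u v * ((L s)^n/(n.factorial : ℝ) * Λt s))
          = dist u v * ((L (t:ℝ))^(n+1)/((n+1).factorial : ℝ)) := by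
        rw [intervalIntegral.integral_const_mul]
        congr 1
        have h2 := hm.2
        simp only [ne_eq, zero_pow, Nat.succ_ne_zero, not_false_iff, zero_div, sub_zero] at h2
        rw [← h2]
      rw [hval, abs_of_nonneg]
      · have : 0 ≤ (L (t:ℝ))^(n+1)/((n+1).factorial : ℝ) := by
          have := hL0 _ htm; positivity
        nlinarith [dist_nonneg (x := u) (y := v)]
      · have : 0 ≤ (L (t:ℝ))^(n+1)/((n+1).factorial : ℝ) := by
          have := hL0 _ htm; positivity
        nlinarith [dist_nonneg (x := u) (y := v)]
  have hLd0 : 0 ≤ L d := hL0 d ⟨hcd, le_rfl⟩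
  have hdistiter : ∀ n (u v : C(Icc c d, E)),
      dist (T^[n] u) (T^[n] v) ≤ (L d)^n / (n.factorial : ℝ) * dist u v := by
    intro n u v
    have hnn : (0:ℝ) ≤ (L d)^n / (n.factorial : ℝ) * dist u v := by
      have := dist_nonneg (x := u) (y := v); positivity
    rw [ContinuousMap.dist_le hnn]
    intro x
    rw [dist_eq_norm]
    refine le_trans (hiter n u v x) ?_
    refine mul_le_mul_of_nonneg_right ?_ dist_nonneg
    have hx0 : 0 ≤ L (x:ℝ) := hL0 _ x.2
    have hxd : L (x:ℝ) ≤ L d := hLd _ x.2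
    have : (L (x:ℝ))^n ≤ (L d)^n := pow_le_pow_left₀ hx0 hxd n
    have hf0 : (0:ℝ) < (n.factorial : ℝ) := by exact_mod_cast n.factorial_pos
    exact (div_le_div_iff_of_pos_right hf0).mpr this
  -- pick a contracting iterate
  obtain ⟨n, hn⟩ : ∃ n : ℕ, (L d)^n / (n.factorial : ℝ) < 1 := by
    have h := FloorSemiring.tendsto_pow_div_factorial_atTop (L d)
    exact (h.eventually_lt_const one_pos).exists
  have hq0 : (0:ℝ) ≤ (L d)^n / (n.factorial : ℝ) := by positivity
  set q : NNReal := ⟨(L d)^n / (n.factorial : ℝ), hq0⟩ with hqdef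
  have hcontr : ContractingWith q (T^[n]) := by
    constructor
    · exact_mod_cast hn
    · refine LipschitzWith.of_dist_le_mul fun u v => ?_
      exact hdistiter n u v
  set Yc : C(Icc c d, E) := ContractingWith.fixedPoint (T^[n]) hcontr with hYc
  have hfixn : Function.IsFixedPt (T^[n]) Yc := hcontr.fixedPoint_isFixedPt
  have hTfix : T Yc = Yc := by
    have h1 : Function.IsFixedPt (T^[n]) (T Yc) := by
      show T^[n] (T Yc) = T Yc
      rw [← Function.iterate_succ_apply, Function.iterate_succ_apply', hfixn]
    have h2 := hcontr.fixedPoint_unique h1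
    rw [← hYc] at h2
    rw [h2]
  set Y : ℝ → E := fun t => Yc (projIcc c d hcd t) with hYdef
  have hYcont : Continuous Y := Yc.continuous.comp continuous_projIcc
  have hYeq : ∀ t (htm : t ∈ Icc c d), Y t = Yc ⟨t, htm⟩ := by
    intro t htm
    rw [hYdef]
    simp only
    rw [projIcc_of_mem hcd htm]
  have hmkGY : ∀ u : C(Icc c d, E), ∀ s ∈ Icc c d, mkG u s = F s (u (projIcc c d hcd s)) :=
    fun u s hs => Set.indicator_of_mem hs _
  have hYsol : ∀ t ∈ Icc c d, Y t = x₀ + ∫ s in c..t, F s (Y s) := by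
    intro t htm
    have h1 : Yc ⟨t, htm⟩ = T Yc ⟨t, htm⟩ := by rw [hTfix]
    rw [hYeq t htm, h1, hTapply]
    congr 1
    refine intervalIntegral.integral_congr fun s hs => ?_
    rw [uIcc_of_le htm.1] at hs
    have hsm : s ∈ Icc c d := ⟨hs.1, le_trans hs.2 htm.2⟩
    rw [hmkGY Yc s hsm]
  refine ⟨Y, hYcont, hYsol, ?_⟩
  intro Z hZcont hZsol t htm
  set Zc : C(Icc c d, E) := ⟨fun t => Z t, continuousOn_iff_continuous_restrict.mp hZcont⟩
    with hZc
  have hZfix : Function.IsFixedPt T Zc := by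
    show T Zc = Zc
    refine ContinuousMap.ext fun x => ?_
    rw [hTapply]
    have hZx : Zc x = Z (x:ℝ) := rfl
    rw [hZx, hZsol (x:ℝ) x.2]
    congr 1
    refine intervalIntegral.integral_congr fun s hs => ?_
    rw [uIcc_of_le x.2.1] at hs
    have hsm : s ∈ Icc c d := ⟨hs.1, le_trans hs.2 x.2.2⟩
    rw [hmkGY Zc s hsm]
    congr 1
    rw [projIcc_of_mem hcd hsm]
    rfl
  have hZfixn : Function.IsFixedPt (T^[n]) Zc := hZfix.iterate n
  have hZY : Zc = Yc := by rw [hYc]; exact hcontr.fixedPoint_unique hZfixn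
  have : Z t = Zc ⟨t, htm⟩ := rfl
  rw [this, hZY, ← hYeq t htm]

/-- Existence and uniqueness for the single-valued impulsive problem
`y' = g(t,y)` off the pulse hypersurface, `y(0) = y₀`, `y(t⁺) = y(t) + I(y(t))` at
`t = τ(y(t))`: there is exactly one solution on `[0,a]`, and it has exactly one jump. -/
theorem stmt18 (a : ℝ) (ha : 0 < a) (N : ℕ)
    (g : ℝ → EuclideanSpace ℝ (Fin N) → EuclideanSpace ℝ (Fin N))
    (hmeas : ∀ x, Measurable (fun t => g t x))
    (α : ℝ → ℝ) (hα : IntegrableOn α (Icc 0 a)) (hα0 : ∀ t, 0 ≤ α t)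
    (hgrow : ∀ t ∈ Icc 0 a, ∀ x, ‖g t x‖ ≤ α t * (1 + ‖x‖) + 1)
    (hlip : ∀ R > (0:ℝ), ∃ Λ : ℝ → ℝ, IntegrableOn Λ (Icc 0 a) ∧ (∀ t, 0 ≤ Λ t) ∧
      ∀ t ∈ Icc 0 a, ∀ x ∈ closedBall (0 : EuclideanSpace ℝ (Fin N)) R,
        ∀ x' ∈ closedBall (0 : EuclideanSpace ℝ (Fin N)) R,
          ‖g t x - g t x'‖ ≤ Λ t * ‖x - x'‖)
    (τ : EuclideanSpace ℝ (Fin N) → ℝ) (hτ : ContDiff ℝ 1 τ)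
    (hτa : ∀ x, τ x ∈ Ioo 0 a)
    (I : EuclideanSpace ℝ (Fin N) → EuclideanSpace ℝ (Fin N)) (hI : Continuous I)
    (hτI : ∀ x, τ (x + I x) ≤ τ x)
    (p' : ℝ) (hp' : 0 < p')
    (htrans : ∀ t ∈ Icc 0 a, ∀ x, fderiv ℝ τ x (g t x) - 1 < -p')
    (y₀ : EuclideanSpace ℝ (Fin N)) :
    ∃ (y : ℝ → EuclideanSpace ℝ (Fin N)) (t₁ : ℝ),
      (t₁ ∈ Ioo 0 a ∧ τ (y t₁) = t₁ ∧
        (∀ t ∈ Icc 0 a, τ (y t) = t → t = t₁) ∧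
        (∀ t ∈ Icc 0 t₁, y t = y₀ + ∫ s in (0:ℝ)..t, g s (y s)) ∧
        (∀ t ∈ Ioc t₁ a, y t = y₀ + I (y t₁) + ∫ s in (0:ℝ)..t, g s (y s))) ∧
      (∀ (z : ℝ → EuclideanSpace ℝ (Fin N)) (s₁ : ℝ),
        (s₁ ∈ Ioo 0 a ∧ τ (z s₁) = s₁ ∧
          (∀ t ∈ Icc 0 a, τ (z t) = t → t = s₁) ∧
          (∀ t ∈ Icc 0 s₁, z t = y₀ + ∫ s in (0:ℝ)..t, g s (z s)) ∧
          (∀ t ∈ Ioc s₁ a, z t = y₀ + I (z s₁) + ∫ s in (0:ℝ)..t, g s (z s))) →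
        s₁ = t₁ ∧ ∀ t ∈ Icc 0 a, z t = y t) := by
  classical
  have ha0 : (0:ℝ) ≤ a := ha.le
  set A : ℝ := ∫ s in Icc 0 a, α s with hA
  have hA0 : 0 ≤ A := setIntegral_nonneg measurableSet_Icc fun s _ => hα0 s
  set C₁ : ℝ := ‖y₀‖ + A + a with hC₁
  have hC₁0 : 0 < C₁ := by positivity
  set R₁ : ℝ := 2 * C₁ * Real.exp (2 * A) with hR₁
  have hR₁0 : 0 < R₁ := by positivity
  obtain ⟨xI, hxI, hxImax⟩ := (isCompact_closedBall (0:EuclideanSpace ℝ (Fin N)) R₁).exists_isMaxOn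
    (nonempty_closedBall.mpr hR₁0.le) ((continuous_norm.comp hI).continuousOn)
  set MI : ℝ := ‖I xI‖ with hMI
  have hMI0 : 0 ≤ MI := norm_nonneg _
  have hMIb : ∀ x ∈ closedBall (0:EuclideanSpace ℝ (Fin N)) R₁, ‖I x‖ ≤ MI := hxImax
  set C₂ : ℝ := (R₁ + MI) + A + a with hC₂
  have hC₂0 : 0 < C₂ := by positivity
  set R₂ : ℝ := 2 * C₂ * Real.exp (2 * A) with hR₂
  have hR₂0 : 0 < R₂ := by positivity
  set R : ℝ := max R₁ R₂ with hRdef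
  have hRpos : 0 < R := lt_of_lt_of_le hR₁0 (le_max_left _ _)
  have hR0 : 0 ≤ R := hRpos.le
  obtain ⟨Λ, hΛI, hΛ0, hΛlip⟩ := hlip R hRpos
  set P : EuclideanSpace ℝ (Fin N) → EuclideanSpace ℝ (Fin N) := radProj R with hP
  set G : ℝ → EuclideanSpace ℝ (Fin N) → EuclideanSpace ℝ (Fin N) :=
    fun t x => if t ∈ Icc (0:ℝ) a then g t (P x) else 0 with hG
  have hPball : ∀ x, P x ∈ closedBall (0:EuclideanSpace ℝ (Fin N)) R :=
    fun x => mem_closedBall_zero_iff.mpr (radProj_norm hR0 x)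
  have hGm : ∀ x, Measurable (fun t => G t x) :=
    fun x => Measurable.ite measurableSet_Icc (hmeas (P x)) measurable_const
  have hGc : ∀ t, Continuous (G t) := by
    intro t
    by_cases htm : t ∈ Icc (0:ℝ) a
    · have hGt : G t = fun x => g t (P x) := by funext x; rw [hG]; simp [htm]
      rw [hGt]
      refine LipschitzWith.continuous (K := Real.toNNReal (2 * Λ t))
        (LipschitzWith.of_dist_le_mul fun x y => ?_)
      rw [dist_eq_norm, dist_eq_norm]
      have h1 := hΛlip t htm (P x) (hPball x) (P y) (hPball y)
      have h2 := radProj_lip hR0 x y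
      have h3 : (Real.toNNReal (2 * Λ t) : ℝ) = 2 * Λ t :=
        Real.coe_toNNReal _ (by nlinarith [hΛ0 t])
      calc ‖g t (P x) - g t (P y)‖ ≤ Λ t * ‖P x - P y‖ := h1
        _ ≤ Λ t * (2 * ‖x - y‖) := mul_le_mul_of_nonneg_left h2 (hΛ0 t)
        _ = (Real.toNNReal (2 * Λ t) : ℝ) * ‖x - y‖ := by rw [h3]; ring
    · have hGt : G t = fun _ => 0 := by funext x; rw [hG]; simp [htm]
      rw [hGt]; exact continuous_const
  set β : ℝ → ℝ := fun t => α t * (1 + R) + 1 with hβ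
  have hconst01 : IntegrableOn (fun _ : ℝ => (1:ℝ)) (Icc 0 a) :=
    integrableOn_const measure_Icc_lt_top.ne
  have hβI : IntegrableOn β (Icc 0 a) := (hα.mul_const _).add hconst01
  have hGb : ∀ t ∈ Icc (0:ℝ) a, ∀ x, ‖G t x‖ ≤ β t := by
    intro t htm x
    rw [hG]; simp only [htm, if_true]
    refine le_trans (hgrow t htm (P x)) ?_
    have h1 := radProj_norm hR0 x
    have h2 := hα0 t
    rw [hβ]; simp only; nlinarith
  set Λ2 : ℝ → ℝ := fun t => 2 * Λ t with hΛ2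
  have hΛ2I : IntegrableOn Λ2 (Icc 0 a) := hΛI.const_mul 2
  have hΛ20 : ∀ t, 0 ≤ Λ2 t := fun t => by rw [hΛ2]; simp only; nlinarith [hΛ0 t]
  have hGl : ∀ t ∈ Icc (0:ℝ) a, ∀ x x', ‖G t x - G t x'‖ ≤ Λ2 t * ‖x - x'‖ := by
    intro t htm x x'
    rw [hG]; simp only [htm, if_true]
    refine le_trans (hΛlip t htm _ (hPball x) _ (hPball x')) ?_
    rw [hΛ2]; simp only
    have h2 := radProj_lip hR0 x x'
    nlinarith [hΛ0 t]
  have hGgrow : ∀ t ∈ Icc (0:ℝ) a, ∀ x, ‖G t x‖ ≤ α t * (1 + ‖x‖) + 1 := by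
    intro t htm x
    rw [hG]; simp only [htm, if_true]
    refine le_trans (hgrow t htm (P x)) ?_
    have h1 := radProj_norm_le_self hR0 x
    nlinarith [hα0 t]
  have hGeq : ∀ t ∈ Icc (0:ℝ) a, ∀ x : EuclideanSpace ℝ (Fin N), ‖x‖ ≤ R → G t x = g t x := by
    intro t htm x hx
    rw [hG]; simp only [htm, if_true]
    rw [hP, radProj_eq_self hx]
  have hjointG : Measurable (Function.uncurry
      fun (x : EuclideanSpace ℝ (Fin N)) (t : ℝ) => G t x) :=
    measurable_uncurry_of_continuous_of_measurable (fun t => hGc t) hGm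
  have hcompG : ∀ (U : ℝ → EuclideanSpace ℝ (Fin N)), Continuous U →
      Measurable (fun s => G s (U s)) := by
    intro U hU
    have he : (fun s => G s (U s))
        = (Function.uncurry fun (x : EuclideanSpace ℝ (Fin N)) (t : ℝ) => G t x)
          ∘ (fun s => (U s, s)) := rfl
    rw [he]; exact hjointG.comp (hU.measurable.prodMk measurable_id)
  have hgconstI : ∀ v : EuclideanSpace ℝ (Fin N),
      IntegrableOn (fun s => g s v) (Icc 0 a) := by
    intro v
    refine Integrable.mono' ((hα.mul_const (1 + ‖v‖)).add hconst01)
      ((hmeas v).aestronglyMeasurable)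
      (ae_restrict_of_forall_mem measurableSet_Icc fun s hs => hgrow s hs v)
  -- solution without jump on [0,a]
  obtain ⟨Ym, hYmcont, hYmsol, hYmuniq⟩ := EU ha0 hβI hΛ2I hΛ20 hGm hGc hGb hGl y₀
  have hYmIntG : IntegrableOn (fun s => G s (Ym s)) (Icc 0 a) :=
    Integrable.mono' hβI ((hcompG Ym hYmcont).aestronglyMeasurable)
      (ae_restrict_of_forall_mem measurableSet_Icc fun s hs => hGb s hs (Ym s))
  have hYmR : ∀ t ∈ Icc (0:ℝ) a, ‖Ym t‖ ≤ R₁ := by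
    have happ := apriori ha0 hα hα0 ha0 subset_rfl hYmIntG hYmcont.continuousOn hYmsol
      (fun s hs => hGgrow s hs (Ym s))
    intro t htm
    have h := happ t htm
    rw [hR₁, hC₁, hA]
    exact h
  have hYmR' : ∀ t ∈ Icc (0:ℝ) a, ‖Ym t‖ ≤ R :=
    fun t ht => le_trans (hYmR t ht) (le_max_left _ _)
  have hYmg : ∀ s ∈ Icc (0:ℝ) a, G s (Ym s) = g s (Ym s) :=
    fun s hs => hGeq s hs _ (hYmR' s hs)
  have hYmIntg : IntegrableOn (fun s => g s (Ym s)) (Icc 0 a) :=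
    hYmIntG.congr_fun (fun s hs => hYmg s hs) measurableSet_Icc
  have hYmsolg : ∀ t ∈ Icc (0:ℝ) a, Ym t = y₀ + ∫ s in (0:ℝ)..t, g s (Ym s) := by
    intro t htm
    rw [hYmsol t htm]
    congr 1
    refine intervalIntegral.integral_congr fun s hs => ?_
    rw [uIcc_of_le htm.1] at hs
    exact hYmg s ⟨hs.1, le_trans hs.2 htm.2⟩
  have hYm0 : Ym 0 = y₀ := by
    have := hYmsol 0 ⟨le_rfl, ha0⟩; simpa using this
  -- strict decrease of τ(W t) - t along solutions
  have hdecay : ∀ (c' d' : ℝ) (W : ℝ → EuclideanSpace ℝ (Fin N))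
      (w₀ : EuclideanSpace ℝ (Fin N)), 0 ≤ c' → d' ≤ a →
      IntegrableOn (fun s => g s (W s)) (Icc c' d') →
      (∀ t ∈ Icc c' d', W t = w₀ + ∫ s in c'..t, g s (W s)) →
      ∀ s ∈ Icc c' d', ∀ t ∈ Icc c' d', s ≤ t →
        (τ (W t) - t) - (τ (W s) - s) ≤ -p' * (t - s) := by
    intro c' d' W w₀ hc0 hda hint hsol s hs t ht hst
    have hcd' : c' ≤ d' := le_trans hs.1 (le_trans hst ht.2)
    have hmt := master hcd' hint hsol hτ ht
    have hms := master hcd' hint hsol hτ hs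
    have hIIst : IntervalIntegrable (fun r => fderiv ℝ τ (W r) (g r (W r))) volume s t := by
      refine hmt.1.mono_set ?_
      rw [uIcc_of_le hst, uIcc_of_le ht.1]
      exact Icc_subset_Icc hs.1 le_rfl
    have hsum := intervalIntegral.integral_add_adjacent_intervals hms.1 hIIst
    have hb : ∀ r ∈ Icc s t, fderiv ℝ τ (W r) (g r (W r)) ≤ 1 - p' := by
      intro r hr
      have hrm : r ∈ Icc (0:ℝ) a :=
        ⟨le_trans hc0 (le_trans hs.1 hr.1), le_trans hr.2 (le_trans ht.2 hda)⟩
      have := htrans r hrm (W r)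
      linarith
    have hmono := intervalIntegral.integral_mono_on hst hIIst intervalIntegrable_const hb
    rw [intervalIntegral.integral_const, smul_eq_mul] at hmono
    have hval : (∫ r in s..t, fderiv ℝ τ (W r) (g r (W r)))
        = (τ (W t) - τ w₀) - (τ (W s) - τ w₀) := by
      rw [← hmt.2, ← hms.2] at hsum
      linarith
    rw [hval] at hmono
    nlinarith
  -- the unique jump time
  have hwmcont : ContinuousOn (fun t => τ (Ym t) - t) (Icc 0 a) :=
    ((hτ.continuous.comp hYmcont).sub continuous_id).continuousOn
  obtain ⟨t₁, ht₁m, ht₁0⟩ : ∃ t₁ ∈ Icc (0:ℝ) a, τ (Ym t₁) - t₁ = 0 := by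
    have h0mem : (0:ℝ) ∈ Icc (τ (Ym a) - a) (τ (Ym 0) - 0) := by
      constructor
      · linarith [(hτa (Ym a)).2]
      · rw [hYm0]
        simp only [sub_zero]
        linarith [(hτa y₀).1]
    obtain ⟨t₁, ht₁, he⟩ := intermediate_value_Icc' ha0 hwmcont h0mem
    exact ⟨t₁, ht₁, he⟩
  have ht₁0' : τ (Ym t₁) = t₁ := by linarith
  have hdecaym := hdecay 0 a Ym y₀ le_rfl le_rfl hYmIntg hYmsolg
  have hYmcross : ∀ t ∈ Icc (0:ℝ) a, τ (Ym t) = t → t = t₁ := by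
    intro t htm hcr
    rcases lt_trichotomy t t₁ with h | h | h
    · exfalso
      have hd := hdecaym t htm t₁ ht₁m h.le
      nlinarith
    · exact h
    · exfalso
      have hd := hdecaym t₁ ht₁m t htm h.le
      nlinarith
  have ht₁Ioo : t₁ ∈ Ioo 0 a := by
    constructor
    · rcases eq_or_lt_of_le ht₁m.1 with h | h
      · exfalso
        rw [← h] at ht₁0'
        rw [hYm0] at ht₁0'
        linarith [(hτa y₀).1]
      · exact h
    · rcases eq_or_lt_of_le ht₁m.2 with h | h
      · exfalso
        rw [h] at ht₁0'
        linarith [(hτa (Ym a)).2]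
      · exact h
  have ht₁a : t₁ ≤ a := ht₁m.2
  -- solution on [t₁, a] after the jump
  set c₁ : EuclideanSpace ℝ (Fin N) := Ym t₁ + I (Ym t₁) with hc₁
  have hc₁norm : ‖c₁‖ ≤ R₁ + MI :=
    le_trans (norm_add_le _ _)
      (add_le_add (hYmR t₁ ht₁m) (hMIb _ (mem_closedBall_zero_iff.mpr (hYmR t₁ ht₁m))))
  have hsub₁ : Icc t₁ a ⊆ Icc (0:ℝ) a := Icc_subset_Icc ht₁m.1 le_rfl
  obtain ⟨Yp, hYpcont, hYpsol, hYpuniq⟩ := EU ht₁a (hβI.mono_set hsub₁)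
    (hΛ2I.mono_set hsub₁) hΛ20 hGm hGc (fun t ht => hGb t (hsub₁ ht))
    (fun t ht => hGl t (hsub₁ ht)) c₁
  have hYpIntG : IntegrableOn (fun s => G s (Yp s)) (Icc t₁ a) :=
    Integrable.mono' (hβI.mono_set hsub₁) ((hcompG Yp hYpcont).aestronglyMeasurable)
      (ae_restrict_of_forall_mem measurableSet_Icc fun s hs => hGb s (hsub₁ hs) (Yp s))
  have hYpR : ∀ t ∈ Icc t₁ a, ‖Yp t‖ ≤ R₂ := by
    have happ := apriori ha0 hα hα0 ht₁a hsub₁ hYpIntG hYpcont.continuousOn hYpsol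
      (fun s hs => hGgrow s (hsub₁ hs) (Yp s))
    intro t htm
    refine le_trans (happ t htm) ?_
    rw [hR₂, hC₂, hA]
    exact mul_le_mul_of_nonneg_right (by linarith) (Real.exp_pos _).le
  have hYpR' : ∀ t ∈ Icc t₁ a, ‖Yp t‖ ≤ R :=
    fun t ht => le_trans (hYpR t ht) (le_max_right _ _)
  have hYpg : ∀ s ∈ Icc t₁ a, G s (Yp s) = g s (Yp s) :=
    fun s hs => hGeq s (hsub₁ hs) _ (hYpR' s hs)
  have hYpIntg : IntegrableOn (fun s => g s (Yp s)) (Icc t₁ a) :=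
    hYpIntG.congr_fun (fun s hs => hYpg s hs) measurableSet_Icc
  have hYpsolg : ∀ t ∈ Icc t₁ a, Yp t = c₁ + ∫ s in t₁..t, g s (Yp s) := by
    intro t htm
    rw [hYpsol t htm]
    congr 1
    refine intervalIntegral.integral_congr fun s hs => ?_
    rw [uIcc_of_le htm.1] at hs
    exact hYpg s ⟨hs.1, le_trans hs.2 htm.2⟩
  have hYpt₁ : Yp t₁ = c₁ := by
    have := hYpsol t₁ ⟨le_rfl, ht₁a⟩; simpa using this
  have hdecayp := hdecay t₁ a Yp c₁ ht₁m.1 le_rfl hYpIntg hYpsolg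
  have hwpneg : ∀ t ∈ Ioc t₁ a, τ (Yp t) < t := by
    intro t htm
    have h1 := hdecayp t₁ ⟨le_rfl, ht₁a⟩ t ⟨htm.1.le, htm.2⟩ htm.1.le
    have h2 : τ (Yp t₁) - t₁ ≤ 0 := by
      rw [hYpt₁, hc₁]
      have := hτI (Ym t₁)
      linarith
    have h3 := htm.1
    nlinarith
  -- the glued solution
  set y : ℝ → EuclideanSpace ℝ (Fin N) := fun t => if t ≤ t₁ then Ym t else Yp t with hy
  have hyt₁ : y t₁ = Ym t₁ := by rw [hy]; simp
  have hyle : ∀ t, t ≤ t₁ → y t = Ym t := fun t h => by rw [hy]; simp [h]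
  have hygt : ∀ t, t₁ < t → y t = Yp t := fun t h => by rw [hy]; simp [not_le.mpr h]
  refine ⟨y, t₁, ⟨ht₁Ioo, ?_, ?_, ?_, ?_⟩, ?_⟩
  · rw [hyt₁]; exact ht₁0'
  · intro t htm hcross
    rcases le_or_gt t t₁ with h | h
    · rw [hyle t h] at hcross
      exact hYmcross t htm hcross
    · exfalso
      rw [hygt t h] at hcross
      have := hwpneg t ⟨h, htm.2⟩
      linarith
  · intro t htm
    have htm' : t ∈ Icc (0:ℝ) a := ⟨htm.1, le_trans htm.2 ht₁a⟩
    rw [hyle t htm.2, hYmsolg t htm']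
    congr 1
    refine (intervalIntegral.integral_congr fun s hs => ?_).symm
    rw [uIcc_of_le htm.1] at hs
    rw [hyle s (le_trans hs.2 htm.2)]
  · intro t htm
    have h0t₁ : IntervalIntegrable (fun s => g s (y s)) volume 0 t₁ := by
      rw [intervalIntegrable_iff_integrableOn_Ioc_of_le ht₁m.1]
      refine (hYmIntg.mono_set (fun r hr => ⟨hr.1.le, le_trans hr.2 ht₁a⟩)).congr_fun
        (fun r hr => by rw [hyle r hr.2]) measurableSet_Ioc
    have ht₁t : IntervalIntegrable (fun s => g s (y s)) volume t₁ t := by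
      rw [intervalIntegrable_iff_integrableOn_Ioc_of_le htm.1.le]
      refine (hYpIntg.mono_set (fun r hr => ⟨hr.1.le, le_trans hr.2 htm.2⟩)).congr_fun
        (fun r hr => by rw [hygt r hr.1]) measurableSet_Ioc
    rw [← intervalIntegral.integral_add_adjacent_intervals h0t₁ ht₁t]
    have hI1 : (∫ s in (0:ℝ)..t₁, g s (y s)) = Ym t₁ - y₀ := by
      have he : (∫ s in (0:ℝ)..t₁, g s (y s)) = ∫ s in (0:ℝ)..t₁, g s (Ym s) :=
        intervalIntegral.integral_congr fun s hs => by
          rw [uIcc_of_le ht₁m.1] at hs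
          rw [hyle s hs.2]
      rw [he, hYmsolg t₁ ht₁m]
      abel
    have hI2 : (∫ s in t₁..t, g s (y s)) = Yp t - c₁ := by
      have he : (∫ s in t₁..t, g s (y s)) = ∫ s in t₁..t, g s (Yp s) := by
        refine intervalIntegral.integral_congr_ae
          (Filter.Eventually.of_forall fun x hxm => ?_)
        rw [uIoc_of_le htm.1.le] at hxm
        rw [hygt x hxm.1]
      rw [he, hYpsolg t ⟨htm.1.le, htm.2⟩]
      abel
    rw [hygt t htm.1, hI1, hI2, hyt₁, hc₁]
    abel
  · rintro z s₁ ⟨hzIoo, hzcross, _hzuc, hzsol1, hzsol2⟩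
    have hs₁m : s₁ ∈ Icc (0:ℝ) a := ⟨hzIoo.1.le, hzIoo.2.le⟩
    have hz0 : z 0 = y₀ := by
      have := hzsol1 0 ⟨le_rfl, hzIoo.1.le⟩; simpa using this
    set S : Set ℝ := {u | u ∈ Icc 0 s₁ ∧ ∀ r ∈ Icc (0:ℝ) u, z r = Ym r} with hS
    have h0S : (0:ℝ) ∈ S := by
      refine ⟨⟨le_rfl, hzIoo.1.le⟩, fun r hr => ?_⟩
      have hre : r = 0 := le_antisymm hr.2 hr.1
      rw [hre, hz0, hYm0]
    have hSbdd : BddAbove S := ⟨s₁, fun u hu => hu.1.2⟩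
    have hSne : S.Nonempty := ⟨0, h0S⟩
    set b : ℝ := sSup S with hb
    have hb0 : 0 ≤ b := le_csSup hSbdd h0S
    have hbs₁ : b ≤ s₁ := csSup_le hSne fun u hu => hu.1.2
    have hblt : ∀ r, 0 ≤ r → r < b → z r = Ym r := by
      intro r hr0 hrb
      obtain ⟨u, huS, hru⟩ := exists_lt_of_lt_csSup hSne hrb
      exact huS.2 r ⟨hr0, hru.le⟩
    have hbz : z b = Ym b := by
      rcases eq_or_lt_of_le hb0 with h | h
      · rw [← h, hz0, hYm0]
      · have hbm : b ∈ Icc (0:ℝ) s₁ := ⟨hb0, hbs₁⟩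
        have h1 := hzsol1 b hbm
        have h2 : (∫ s in (0:ℝ)..b, g s (z s)) = ∫ s in (0:ℝ)..b, g s (Ym s) := by
          refine intervalIntegral.integral_congr_ae ?_
          filter_upwards [Set.Countable.ae_notMem (countable_singleton b) volume]
            with x hxb hxm
          rw [uIoc_of_le hb0] at hxm
          have hxb' : x < b := lt_of_le_of_ne hxm.2 (by simpa using hxb)
          rw [hblt x hxm.1.le hxb']
        rw [h1, h2, ← hYmsolg b ⟨hb0, le_trans hbs₁ hs₁m.2⟩]
    have hbS : b ∈ S := by
      refine ⟨⟨hb0, hbs₁⟩, fun r hr => ?_⟩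
      rcases eq_or_lt_of_le hr.2 with h | h
      · rw [h]; exact hbz
      · exact hblt r hr.1 h
    have hbeq : b = s₁ := by
      by_contra hne
      have hblt₁ : b < s₁ := lt_of_le_of_ne hbs₁ hne
      have hjunk : ∀ u ∈ Ioc b s₁, ¬ IntervalIntegrable (fun s => g s (z s)) volume 0 u := by
        intro u hum hInt
        have hu0a : Icc (0:ℝ) u ⊆ Icc (0:ℝ) a := Icc_subset_Icc le_rfl (le_trans hum.2 hs₁m.2)
        have hu0 : (0:ℝ) ≤ u := le_trans hb0 hum.1.le
        have hzsolt : ∀ r ∈ Icc (0:ℝ) u, z r = y₀ + ∫ s in (0:ℝ)..r, g s (z s) :=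
          fun r hr => hzsol1 r ⟨hr.1, le_trans hr.2 hum.2⟩
        have hIntOn : IntegrableOn (fun s => g s (z s)) (Icc 0 u) :=
          (integrableOn_Icc_iff_integrableOn_Ioc).mpr
            ((intervalIntegrable_iff_integrableOn_Ioc_of_le hu0).mp hInt)
        have hzcont : ContinuousOn z (Icc 0 u) := by
          have hcont0 : ContinuousOn (fun r => y₀ + ∫ s in (0:ℝ)..r, g s (z s)) (Icc 0 u) := by
            refine continuousOn_const.add ?_
            have h4 := intervalIntegral.continuousOn_primitive_interval (a := 0) (b := u)
              (f := fun s => g s (z s)) (μ := volume) (by rwa [uIcc_of_le hu0])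
            rwa [uIcc_of_le hu0] at h4
          exact ContinuousOn.congr hcont0 (fun r hr => hzsolt r hr)
        have hzR : ∀ r ∈ Icc (0:ℝ) u, ‖z r‖ ≤ R₁ := by
          have happ := apriori ha0 hα hα0 hu0 hu0a hIntOn hzcont hzsolt
            (fun s hs => hgrow s (hu0a hs) (z s))
          intro r hr
          have h := happ r hr
          rw [hR₁, hC₁, hA]
          exact h
        have hzsolG : ∀ r ∈ Icc (0:ℝ) u, z r = y₀ + ∫ s in (0:ℝ)..r, G s (z s) := by
          intro r hr
          rw [hzsolt r hr]
          congr 1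
          refine (intervalIntegral.integral_congr fun s hs => ?_)
          rw [uIcc_of_le hr.1] at hs
          have hst' : s ∈ Icc (0:ℝ) u := ⟨hs.1, le_trans hs.2 hr.2⟩
          exact (hGeq s (hu0a hst') _ (le_trans (hzR s hst') (le_max_left _ _))).symm
        obtain ⟨W, hWcont, hWsol, hWuniq⟩ := EU hu0 (hβI.mono_set hu0a)
          (hΛ2I.mono_set hu0a) hΛ20 hGm hGc (fun r hr => hGb r (hu0a hr))
          (fun r hr => hGl r (hu0a hr)) y₀
        have hzW := hWuniq z hzcont (fun r hr => hzsolG r hr)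
        have hYmW := hWuniq Ym hYmcont.continuousOn (fun r hr => hYmsol r (hu0a hr))
        have huS : u ∈ S := ⟨⟨hu0, hum.2⟩, fun r hr => by rw [hzW hr, ← hYmW hr]⟩
        have := le_csSup hSbdd huS
        linarith [hum.1]
      have hjv : ∀ u ∈ Ioc b s₁, z u = y₀ := by
        intro u hum
        have h5 := hzsol1 u ⟨le_trans hb0 hum.1.le, hum.2⟩
        rw [intervalIntegral.integral_undef (hjunk u hum)] at h5
        simpa using h5
      refine hjunk s₁ ⟨hblt₁, le_rfl⟩ ?_
      have hIIa : IntervalIntegrable (fun s => g s (z s)) volume 0 b := by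
        rw [intervalIntegrable_iff_integrableOn_Ioc_of_le hb0]
        refine (hYmIntg.mono_set
          (fun r hr => ⟨hr.1.le, le_trans hr.2 (le_trans hbs₁ hs₁m.2)⟩)).congr_fun
          (fun r hr => by rw [hbS.2 r ⟨hr.1.le, hr.2⟩]) measurableSet_Ioc
      refine hIIa.trans ?_
      rw [intervalIntegrable_iff_integrableOn_Ioc_of_le hblt₁.le]
      refine ((hgconstI y₀).mono_set
        (fun r hr => ⟨le_trans hb0 hr.1.le, le_trans hr.2 hs₁m.2⟩)).congr_fun
        (fun r hr => by rw [hjv r hr]) measurableSet_Ioc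
    have hzYm : ∀ r ∈ Icc (0:ℝ) s₁, z r = Ym r := by
      rw [hbeq] at hbS
      exact hbS.2
    have hs₁t₁ : s₁ = t₁ := by
      have h1 : τ (Ym s₁) = s₁ := by
        rw [← hzYm s₁ ⟨hzIoo.1.le, le_rfl⟩]
        exact hzcross
      exact hYmcross s₁ hs₁m h1
    rw [hs₁t₁] at hzYm hzsol2
    refine ⟨hs₁t₁, ?_⟩
    -- z = Yp on (t₁, a]
    have hzt₁ : z t₁ = Ym t₁ := hzYm t₁ ⟨ht₁m.1, le_rfl⟩
    have hIz0t₁ : IntervalIntegrable (fun s => g s (z s)) volume 0 t₁ := by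
      rw [intervalIntegrable_iff_integrableOn_Ioc_of_le ht₁m.1]
      exact (hYmIntg.mono_set (fun r hr => ⟨hr.1.le, le_trans hr.2 ht₁a⟩)).congr_fun
        (fun r hr => by rw [hzYm r ⟨hr.1.le, hr.2⟩]) measurableSet_Ioc
    have hκ : ∀ s ∈ Ioc t₁ a, z s = y₀ + I (Ym t₁) + ∫ r in (0:ℝ)..s, g r (z r) := by
      intro s hs
      rw [← hzt₁]
      exact hzsol2 s hs
    have hkey : ∀ u ∈ Ioc t₁ a, IntervalIntegrable (fun s => g s (z s)) volume t₁ u →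
        z u = c₁ + ∫ s in t₁..u, g s (z s) := by
      intro u hu hIntu
      have h1 := hκ u hu
      have h2 : (∫ s in (0:ℝ)..u, g s (z s))
          = (∫ s in (0:ℝ)..t₁, g s (z s)) + ∫ s in t₁..u, g s (z s) :=
        (intervalIntegral.integral_add_adjacent_intervals hIz0t₁ hIntu).symm
      have h3 : (∫ s in (0:ℝ)..t₁, g s (z s)) = Ym t₁ - y₀ := by
        have he : (∫ s in (0:ℝ)..t₁, g s (z s)) = ∫ s in (0:ℝ)..t₁, g s (Ym s) :=
          intervalIntegral.integral_congr fun s hs => by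
            rw [uIcc_of_le ht₁m.1] at hs
            rw [hzYm s hs]
        rw [he, hYmsolg t₁ ht₁m]
        abel
      rw [h1, h2, h3, hc₁]
      abel
    set ζ : ℝ → EuclideanSpace ℝ (Fin N) := fun s => if s = t₁ then c₁ else z s with hζ
    have hζt₁ : ζ t₁ = c₁ := by rw [hζ]; simp
    have hζne : ∀ s, s ≠ t₁ → ζ s = z s := fun s h => by rw [hζ]; simp [h]
    set S' : Set ℝ := {u | u ∈ Icc t₁ a ∧ ∀ r ∈ Icc t₁ u, ζ r = Yp r} with hS'
    have ht₁S' : t₁ ∈ S' := by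
      refine ⟨⟨le_rfl, ht₁a⟩, fun r hr => ?_⟩
      have hre : r = t₁ := le_antisymm hr.2 hr.1
      rw [hre, hζt₁, hYpt₁]
    have hS'bdd : BddAbove S' := ⟨a, fun u hu => hu.1.2⟩
    have hS'ne : S'.Nonempty := ⟨t₁, ht₁S'⟩
    set b' : ℝ := sSup S' with hb'
    have hb'0 : t₁ ≤ b' := le_csSup hS'bdd ht₁S'
    have hb'a : b' ≤ a := csSup_le hS'ne fun u hu => hu.1.2
    have hb'lt : ∀ r, t₁ ≤ r → r < b' → ζ r = Yp r := by
      intro r hr0 hrb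
      obtain ⟨u, huS, hru⟩ := exists_lt_of_lt_csSup hS'ne hrb
      exact huS.2 r ⟨hr0, hru.le⟩
    have hb'z : ζ b' = Yp b' := by
      rcases eq_or_lt_of_le hb'0 with h | h
      · rw [← h, hζt₁, hYpt₁]
      · have hIntb' : IntervalIntegrable (fun s => g s (z s)) volume t₁ b' := by
          rw [intervalIntegrable_iff_integrableOn_Ioc_of_le hb'0]
          refine (hYpIntg.mono_set (fun r hr => ⟨hr.1.le, le_trans hr.2 hb'a⟩)).congr ?_
          rw [Filter.EventuallyEq, ae_restrict_iff' measurableSet_Ioc]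
          filter_upwards [Set.Countable.ae_notMem (countable_singleton b') volume]
            with x hxb hxm
          have hxb' : x < b' := lt_of_le_of_ne hxm.2 (by simpa using hxb)
          rw [← hb'lt x hxm.1.le hxb', hζne x (ne_of_gt hxm.1)]
        have hzb' := hkey b' ⟨h, hb'a⟩ hIntb'
        have he2 : (∫ s in t₁..b', g s (z s)) = ∫ s in t₁..b', g s (Yp s) := by
          refine intervalIntegral.integral_congr_ae ?_
          filter_upwards [Set.Countable.ae_notMem (countable_singleton b') volume]
            with x hxb hxm
          rw [uIoc_of_le hb'0] at hxm
          have hxb' : x < b' := lt_of_le_of_ne hxm.2 (by simpa using hxb)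
          rw [← hζne x (ne_of_gt hxm.1), hb'lt x hxm.1.le hxb']
        rw [hζne b' (ne_of_gt h), hzb', he2, hYpsolg b' ⟨hb'0, hb'a⟩]
    have hb'S' : b' ∈ S' := by
      refine ⟨⟨hb'0, hb'a⟩, fun r hr => ?_⟩
      rcases eq_or_lt_of_le hr.2 with h | h
      · rw [h]; exact hb'z
      · exact hb'lt r hr.1 h
    have hb'eq : b' = a := by
      by_contra hne
      have hb'lta : b' < a := lt_of_le_of_ne hb'a hne
      have hjunk' : ∀ u ∈ Ioc b' a, ¬ IntervalIntegrable (fun s => g s (z s)) volume t₁ u := by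
        intro u hum hInt
        have hu0 : t₁ ≤ u := le_trans hb'0 hum.1.le
        have hsubu : Icc t₁ u ⊆ Icc (0:ℝ) a :=
          fun r hr => ⟨le_trans ht₁m.1 hr.1, le_trans hr.2 hum.2⟩
        have hIntζ : IntervalIntegrable (fun s => g s (ζ s)) volume t₁ u := by
          rw [intervalIntegrable_iff_integrableOn_Ioc_of_le hu0] at hInt ⊢
          refine hInt.congr ?_
          rw [Filter.EventuallyEq, ae_restrict_iff' measurableSet_Ioc]
          refine Filter.Eventually.of_forall fun x hxm => ?_
          rw [hζne x (ne_of_gt hxm.1)]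
        have hζsol : ∀ r ∈ Icc t₁ u, ζ r = c₁ + ∫ s in t₁..r, g s (ζ s) := by
          intro r hr
          have heq3 : (∫ s in t₁..r, g s (ζ s)) = ∫ s in t₁..r, g s (z s) := by
            refine intervalIntegral.integral_congr_ae
              (Filter.Eventually.of_forall fun x hxm => ?_)
            rw [uIoc_of_le hr.1] at hxm
            rw [hζne x (ne_of_gt hxm.1)]
          rcases eq_or_lt_of_le hr.1 with h | h
          · rw [← h, hζt₁]
            simp
          · rw [hζne r (ne_of_gt h), heq3]
            refine hkey r ⟨h, le_trans hr.2 hum.2⟩ (hInt.mono_set ?_)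
            rw [uIcc_of_le hr.1, uIcc_of_le hu0]
            exact Icc_subset_Icc le_rfl hr.2
        have hIntOnζ : IntegrableOn (fun s => g s (ζ s)) (Icc t₁ u) :=
          (integrableOn_Icc_iff_integrableOn_Ioc).mpr
            ((intervalIntegrable_iff_integrableOn_Ioc_of_le hu0).mp hIntζ)
        have hζcont : ContinuousOn ζ (Icc t₁ u) := by
          have hcont0 : ContinuousOn (fun r => c₁ + ∫ s in t₁..r, g s (ζ s)) (Icc t₁ u) := by
            refine continuousOn_const.add ?_
            have h4 := intervalIntegral.continuousOn_primitive_interval (a := t₁) (b := u)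
              (f := fun s => g s (ζ s)) (μ := volume) (by rwa [uIcc_of_le hu0])
            rwa [uIcc_of_le hu0] at h4
          exact ContinuousOn.congr hcont0 (fun r hr => hζsol r hr)
        have hζR : ∀ r ∈ Icc t₁ u, ‖ζ r‖ ≤ R₂ := by
          have happ := apriori ha0 hα hα0 hu0 hsubu hIntOnζ hζcont hζsol
            (fun s hs => hgrow s (hsubu hs) (ζ s))
          intro r hr
          refine le_trans (happ r hr) ?_
          rw [hR₂, hC₂, hA]
          exact mul_le_mul_of_nonneg_right (by linarith) (Real.exp_pos _).le
        have hζsolG : ∀ r ∈ Icc t₁ u, ζ r = c₁ + ∫ s in t₁..r, G s (ζ s) := by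
          intro r hr
          rw [hζsol r hr]
          congr 1
          refine intervalIntegral.integral_congr fun s hs => ?_
          rw [uIcc_of_le hr.1] at hs
          have hst' : s ∈ Icc t₁ u := ⟨hs.1, le_trans hs.2 hr.2⟩
          exact (hGeq s (hsubu hst') _ (le_trans (hζR s hst') (le_max_right _ _))).symm
        obtain ⟨W, hWcont, hWsol, hWuniq⟩ := EU hu0 (hβI.mono_set hsubu)
          (hΛ2I.mono_set hsubu) hΛ20 hGm hGc (fun r hr => hGb r (hsubu hr))
          (fun r hr => hGl r (hsubu hr)) c₁
        have hζW := hWuniq ζ hζcont hζsolG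
        have hYpW := hWuniq Yp hYpcont.continuousOn
          (fun r hr => hYpsol r ⟨hr.1, le_trans hr.2 hum.2⟩)
        have huS' : u ∈ S' := ⟨⟨hu0, hum.2⟩, fun r hr => by rw [hζW hr, ← hYpW hr]⟩
        have := le_csSup hS'bdd huS'
        linarith [hum.1]
      have hjv' : ∀ u ∈ Ioc b' a, z u = y₀ + I (Ym t₁) := by
        intro u hum
        have hu0 : t₁ < u := lt_of_le_of_lt hb'0 hum.1
        have h5 := hκ u ⟨hu0, hum.2⟩
        have hnot : ¬ IntervalIntegrable (fun s => g s (z s)) volume 0 u := by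
          intro hcon
          refine hjunk' u hum (hcon.mono_set ?_)
          rw [uIcc_of_le hu0.le, uIcc_of_le (le_trans ht₁m.1 hu0.le)]
          exact Icc_subset_Icc ht₁m.1 le_rfl
        rw [intervalIntegral.integral_undef hnot] at h5
        simpa using h5
      refine hjunk' a ⟨hb'lta, le_rfl⟩ ?_
      have hIIb' : IntervalIntegrable (fun s => g s (z s)) volume t₁ b' := by
        rw [intervalIntegrable_iff_integrableOn_Ioc_of_le hb'0]
        refine (hYpIntg.mono_set (fun r hr => ⟨hr.1.le, le_trans hr.2 hb'a⟩)).congr_fun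
          (fun r hr => ?_) measurableSet_Ioc
        dsimp only; rw [← hb'S'.2 r ⟨hr.1.le, hr.2⟩, hζne r (ne_of_gt hr.1)]
      refine hIIb'.trans ?_
      rw [intervalIntegrable_iff_integrableOn_Ioc_of_le hb'lta.le]
      refine ((hgconstI (y₀ + I (Ym t₁))).mono_set
        (fun r hr => ⟨le_trans ht₁m.1 (le_trans hb'0 hr.1.le), hr.2⟩)).congr_fun
        (fun r hr => by rw [hjv' r hr]) measurableSet_Ioc
    rw [hb'eq] at hb'S'
    intro t htm
    rcases le_or_gt t t₁ with hle | hgt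
    · rw [hyle t hle, hzYm t ⟨htm.1, hle⟩]
    · rw [hygt t hgt, ← hb'S'.2 t ⟨hgt.le, htm.2⟩, hζne t (ne_of_gt hgt)]
end master
end

section
/- Under hypotheses (F0)–(F3) and (H1)₁–(H3)₁, every solution of the impulsive differential inclusion y'(t) ∈ F(t,y(t)) for t ≠ τ(y(t)), y(0) = y₀, y(t⁺) = y(t) + I(y(t)) at t = τ(y(t)), on [0,a], meets the pulse hypersurface Σ = {(t,x) : t = τ(x)} exactly once. -/
set_option maxHeartbeats 1000000

open Set MeasureTheory Metric

/-- Chain-rule type inequality for a primitive of an integrable function composed with a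
`C¹` function with bounded derivative, proved by approximation by continuous functions. -/
lemma key_ineq {N : ℕ} (τ : EuclideanSpace ℝ (Fin N) → ℝ) (hτ : ContDiff ℝ 1 τ)
    (M : ℝ) (hM : ∀ x, ‖fderiv ℝ τ x‖ ≤ M)
    (g : ℝ → EuclideanSpace ℝ (Fin N)) (hg : Integrable g)
    (c : EuclideanSpace ℝ (Fin N)) (s t : ℝ) (hs : 0 ≤ s) (hst : s ≤ t)
    (B : ℝ)
    (hB : ∀ᵐ u ∂(volume.restrict (Icc s t)),
      fderiv ℝ τ (c + ∫ r in (0:ℝ)..u, g r) (g u) ≤ B) :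
    τ (c + ∫ r in (0:ℝ)..t, g r) - τ (c + ∫ r in (0:ℝ)..s, g r) ≤ B * (t - s) := by
  have hM0 : 0 ≤ M := le_trans (norm_nonneg _) (hM 0)
  set Y : ℝ → EuclideanSpace ℝ (Fin N) := fun u => c + ∫ r in (0:ℝ)..u, g r with hY
  have hdiff : Differentiable ℝ τ := hτ.differentiable one_ne_zero
  have hLip : ∀ x z : EuclideanSpace ℝ (Fin N), ‖τ x - τ z‖ ≤ M * ‖x - z‖ := by
    intro x z
    exact (convex_univ).norm_image_sub_le_of_norm_fderiv_le
      (fun w _ => hdiff w) (fun w _ => hM w) (mem_univ z) (mem_univ x)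
  have hYcont : Continuous Y :=
    continuous_const.add (intervalIntegral.continuous_primitive
      (fun a b => hg.intervalIntegrable) 0)
  have hKcomp : IsCompact (Metric.cthickening 1 (Y '' Icc s t)) :=
    (isCompact_Icc.image hYcont).cthickening
  set K := Metric.cthickening 1 (Y '' Icc s t) with hK
  have hfd : Continuous (fderiv ℝ τ) := hτ.continuous_fderiv one_ne_zero
  have huc : UniformContinuousOn (fderiv ℝ τ) K :=
    hKcomp.uniformContinuousOn_of_continuous hfd.continuousOn
  set Cg : ℝ := ∫ x, ‖g x‖ with hCg
  have hCg0 : 0 ≤ Cg := integral_nonneg fun x => norm_nonneg _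
  refine le_of_forall_pos_le_add fun ε hε => ?_
  set ε' : ℝ := ε / (3 * M + Cg + 1) with hε'
  have hden : 0 < 3 * M + Cg + 1 := by linarith
  have hε'0 : 0 < ε' := div_pos hε hden
  obtain ⟨δ, hδ0, hδ⟩ := (Metric.uniformContinuousOn_iff.1 huc) ε' hε'0
  set δ' : ℝ := min δ (min ε' 1) / 2 with hδ'
  have hδ'0 : 0 < δ' := by
    have : 0 < min δ (min ε' 1) := lt_min hδ0 (lt_min hε'0 one_pos)
    positivity
  obtain ⟨h, hsupp, hgh, hhcont, hhint⟩ := hg.exists_hasCompactSupport_integral_sub_le hδ'0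
  set Z : ℝ → EuclideanSpace ℝ (Fin N) := fun u => c + ∫ r in (0:ℝ)..u, h r with hZ
  have hZcont : Continuous Z :=
    continuous_const.add (intervalIntegral.continuous_primitive
      (fun a b => hhint.intervalIntegrable) 0)
  -- distance between Y and Z
  have hYZ : ∀ u, 0 ≤ u → ‖Y u - Z u‖ ≤ δ' := by
    intro u hu
    have h1 : Y u - Z u = ∫ r in (0:ℝ)..u, (g r - h r) := by
      simp only [hY, hZ]
      rw [intervalIntegral.integral_sub hg.intervalIntegrable hhint.intervalIntegrable]
      abel
    rw [h1]
    calc ‖∫ r in (0:ℝ)..u, (g r - h r)‖ ≤ ∫ r in (0:ℝ)..u, ‖g r - h r‖ :=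
          intervalIntegral.norm_integral_le_integral_norm hu
      _ ≤ ∫ r, ‖g r - h r‖ := by
          rw [intervalIntegral.integral_of_le hu]
          exact setIntegral_le_integral (hg.sub hhint).norm
            (Filter.Eventually.of_forall fun x => norm_nonneg _)
      _ ≤ δ' := hgh
  have hδ'le1 : δ' ≤ 1 := by
    have : min δ (min ε' 1) ≤ 1 := le_trans (min_le_right _ _) (min_le_right _ _)
    rw [hδ']; linarith
  have hδ'ltδ : δ' < δ := by
    have : min δ (min ε' 1) ≤ δ := min_le_left _ _
    rw [hδ']; linarith
  have hδ'leε' : δ' ≤ ε' := by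
    have : min δ (min ε' 1) ≤ ε' := le_trans (min_le_right _ _) (min_le_left _ _)
    rw [hδ']; linarith
  -- FTC for the smooth approximation
  have hZder : ∀ u, HasDerivAt Z (h u) u := by
    intro u
    have : HasDerivAt (fun v => ∫ r in (0:ℝ)..v, h r) (h u) u :=
      intervalIntegral.integral_hasDerivAt_right hhint.intervalIntegrable
        hhint.aestronglyMeasurable.stronglyMeasurableAtFilter hhcont.continuousAt
    exact this.const_add c
  have hcomp : ∀ u, HasDerivAt (fun v => τ (Z v)) (fderiv ℝ τ (Z u) (h u)) u := fun u =>
    ((hdiff (Z u)).hasFDerivAt).comp_hasDerivAt u (hZder u)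
  have hintegrand_cont : Continuous fun u => fderiv ℝ τ (Z u) (h u) :=
    (hfd.comp hZcont).clm_apply hhcont
  have hFTC : τ (Z t) - τ (Z s) = ∫ u in s..t, fderiv ℝ τ (Z u) (h u) := by
    rw [intervalIntegral.integral_eq_sub_of_hasDerivAt (fun u _ => hcomp u)
      (hintegrand_cont.intervalIntegrable s t)]
  -- the majorant
  have hGH : Integrable (fun x => ‖g x - h x‖) volume := by
    simpa using (hg.sub hhint).norm
  set φ : ℝ → ℝ := fun u => B + ε' * ‖g u‖ + M * ‖g u - h u‖ with hφ
  have hint1 : IntervalIntegrable (fun u => B + ε' * ‖g u‖) volume s t :=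
    (intervalIntegrable_const (c := B)).add ((hg.norm.const_mul ε').intervalIntegrable)
  have hint2 : IntervalIntegrable (fun u => M * ‖g u - h u‖) volume s t :=
    (hGH.const_mul M).intervalIntegrable
  have hφint : IntervalIntegrable φ volume s t := hint1.add hint2
  -- pointwise a.e. bound
  have hmono : (fun u => fderiv ℝ τ (Z u) (h u)) ≤ᵐ[volume.restrict (Icc s t)] φ := by
    filter_upwards [hB, ae_restrict_mem measurableSet_Icc] with u hBu hu
    have hu0 : 0 ≤ u := le_trans hs hu.1
    have hYK : Y u ∈ K := Metric.self_subset_cthickening _ (mem_image_of_mem Y hu)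
    have hZK : Z u ∈ K := by
      apply Metric.mem_cthickening_of_dist_le (Z u) (Y u) 1 _ (mem_image_of_mem Y hu)
      rw [dist_eq_norm, norm_sub_rev]
      exact le_trans (hYZ u hu0) hδ'le1
    have hclose : dist (fderiv ℝ τ (Y u)) (fderiv ℝ τ (Z u)) < ε' := by
      apply hδ _ hYK _ hZK
      rw [dist_eq_norm]
      exact lt_of_le_of_lt (hYZ u hu0) hδ'ltδ
    have e1 : fderiv ℝ τ (Z u) (h u) =
        fderiv ℝ τ (Y u) (g u) + (fderiv ℝ τ (Z u) - fderiv ℝ τ (Y u)) (g u)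
          + fderiv ℝ τ (Z u) (h u - g u) := by
      simp only [ContinuousLinearMap.sub_apply, map_sub]; ring
    have e2 : (fderiv ℝ τ (Z u) - fderiv ℝ τ (Y u)) (g u) ≤ ε' * ‖g u‖ := by
      refine le_trans (le_abs_self _) ?_
      rw [← Real.norm_eq_abs]
      refine le_trans (ContinuousLinearMap.le_opNorm _ _) ?_
      apply mul_le_mul_of_nonneg_right _ (norm_nonneg _)
      rw [← dist_eq_norm] at *
      exact le_of_lt (by rwa [dist_comm] at hclose)
    have e3 : fderiv ℝ τ (Z u) (h u - g u) ≤ M * ‖g u - h u‖ := by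
      refine le_trans (le_abs_self _) ?_
      rw [← Real.norm_eq_abs]
      refine le_trans (ContinuousLinearMap.le_opNorm _ _) ?_
      rw [norm_sub_rev]
      exact mul_le_mul_of_nonneg_right (hM _) (norm_nonneg _)
    rw [e1]
    have := hBu
    simp only [hφ]
    linarith
  have hint_le : ∫ u in s..t, fderiv ℝ τ (Z u) (h u) ≤ ∫ u in s..t, φ u :=
    intervalIntegral.integral_mono_ae_restrict hst
      (hintegrand_cont.intervalIntegrable s t) hφint hmono
  -- compute/estimate the integral of φ
  have hφcalc : ∫ u in s..t, φ u
      = B * (t - s) + ε' * (∫ u in s..t, ‖g u‖) + M * ∫ u in s..t, ‖g u - h u‖ := by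
    rw [show φ = fun u => (B + ε' * ‖g u‖) + M * ‖g u - h u‖ from rfl,
      intervalIntegral.integral_add hint1 hint2,
      intervalIntegral.integral_add (intervalIntegrable_const (c := B))
        ((hg.norm.const_mul ε').intervalIntegrable),
      intervalIntegral.integral_const, intervalIntegral.integral_const_mul,
      intervalIntegral.integral_const_mul]
    simp only [smul_eq_mul]
    ring
  have hg_le : ∫ u in s..t, ‖g u‖ ≤ Cg := by
    rw [intervalIntegral.integral_of_le hst]
    exact setIntegral_le_integral hg.norm (Filter.Eventually.of_forall fun x => norm_nonneg _)
  have hgh_le : ∫ u in s..t, ‖g u - h u‖ ≤ δ' := by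
    rw [intervalIntegral.integral_of_le hst]
    refine le_trans (setIntegral_le_integral hGH
      (Filter.Eventually.of_forall fun x => norm_nonneg _)) ?_
    simpa using hgh
  -- Lipschitz transfer from Z to Y
  have hLt : τ (Y t) - τ (Z t) ≤ M * δ' := by
    have := hLip (Y t) (Z t)
    have h2 := hYZ t (le_trans hs hst)
    have h3 : τ (Y t) - τ (Z t) ≤ ‖τ (Y t) - τ (Z t)‖ := le_abs_self _
    nlinarith [norm_nonneg (Y t - Z t)]
  have hLs : τ (Z s) - τ (Y s) ≤ M * δ' := by
    have := hLip (Z s) (Y s)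
    have h2 := hYZ s hs
    have h3 : τ (Z s) - τ (Y s) ≤ ‖τ (Z s) - τ (Y s)‖ := le_abs_self _
    rw [norm_sub_rev] at h2
    nlinarith [norm_nonneg (Z s - Y s)]
  -- put everything together
  have hεfinal : ε' * (3 * M + Cg + 1) ≤ ε := by
    rw [hε', div_mul_cancel₀]
    exact ne_of_gt hden
  have key : τ (Y t) - τ (Y s) ≤ B * (t - s) + ε' * Cg + M * δ' + 2 * (M * δ') := by
    have h4 : ε' * (∫ u in s..t, ‖g u‖) ≤ ε' * Cg :=
      mul_le_mul_of_nonneg_left hg_le (le_of_lt hε'0)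
    have h5 : M * ∫ u in s..t, ‖g u - h u‖ ≤ M * δ' := mul_le_mul_of_nonneg_left hgh_le hM0
    nlinarith [hFTC, hint_le, hφcalc]
  have hδ'ε : M * δ' ≤ M * ε' := mul_le_mul_of_nonneg_left hδ'leε' hM0
  calc τ (Y t) - τ (Y s) ≤ B * (t - s) + ε' * Cg + M * δ' + 2 * (M * δ') := key
    _ ≤ B * (t - s) + ε' * (3 * M + Cg + 1) := by nlinarith [hε'0.le, hδ'ε]
    _ ≤ B * (t - s) + ε := by linarith
/-- Under (F0)–(F3) and (H1)₁–(H3)₁, every solution of the impulsive differential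
inclusion `y' ∈ F(t,y)` off the pulse hypersurface, `y(0) = y₀`,
`y(t⁺) = y(t) + I(y(t))` at `t = τ(y(t))`, meets the hypersurface `{t = τ(x)}` exactly
once on `[0,a]`. -/
theorem stmt19 (a : ℝ) (ha : 0 < a) (N : ℕ)
    (F : ℝ → EuclideanSpace ℝ (Fin N) → Set (EuclideanSpace ℝ (Fin N)))
    -- (F0): compact convex nonempty values
    (hF0 : ∀ t x, IsCompact (F t x) ∧ Convex ℝ (F t x) ∧ (F t x).Nonempty)
    -- (F1): measurable selections of F(·,x)
    (hF1 : ∀ x, ∃ q : ℝ → EuclideanSpace ℝ (Fin N), Measurable q ∧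
      ∀ t ∈ Icc 0 a, q t ∈ F t x)
    -- (F2): almost uniform H-upper semicontinuity in the state variable
    (hF2 : ∀ x : EuclideanSpace ℝ (Fin N), ∀ ε > (0:ℝ), ∃ δ > (0:ℝ),
      ∀ᵐ t ∂(volume.restrict (Icc 0 a)), ∀ x' : EuclideanSpace ℝ (Fin N),
        ‖x - x'‖ < δ → ∀ φ ∈ F t x', infDist φ (F t x) < ε)
    -- (F3): sublinear growth
    (α : ℝ → ℝ) (hα : IntegrableOn α (Icc 0 a)) (hα0 : ∀ t, 0 ≤ α t)
    (hF3 : ∀ᵐ t ∂(volume.restrict (Icc 0 a)), ∀ x, ∀ φ ∈ F t x,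
      ‖φ‖ ≤ α t * (1 + ‖x‖))
    -- (H1)₁: continuous impulse function
    (I : EuclideanSpace ℝ (Fin N) → EuclideanSpace ℝ (Fin N)) (hI : Continuous I)
    -- (H2)₁: τ is C¹, 0 < τ < a, τ(x + I(x)) ≤ τ(x), bounded gradient
    (τ : EuclideanSpace ℝ (Fin N) → ℝ) (hτ : ContDiff ℝ 1 τ)
    (hτa : ∀ x, τ x ∈ Ioo 0 a) (hτI : ∀ x, τ (x + I x) ≤ τ x)
    (M : ℝ) (hM : ∀ x, ‖fderiv ℝ τ x‖ ≤ M)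
    -- (H3)₁: transversality
    (p : ℝ) (hp : 0 < p)
    (hH3 : ∀ᵐ t ∂(volume.restrict (Icc 0 a)), ∀ x, ∀ φ ∈ F t x,
      fderiv ℝ τ x φ - 1 ≤ -p)
    -- a solution y with jump time t₁ and integrable selection f
    (y₀ : EuclideanSpace ℝ (Fin N)) (y : ℝ → EuclideanSpace ℝ (Fin N))
    (t₁ : ℝ) (ht₁ : t₁ ∈ Icc 0 a) (hjump : τ (y t₁) = t₁)
    (f : ℝ → EuclideanSpace ℝ (Fin N)) (hf : IntegrableOn f (Icc 0 a))
    (hsel : ∀ᵐ t ∂(volume.restrict (Icc 0 a)), f t ∈ F t (y t))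
    (hy1 : ∀ t ∈ Icc 0 t₁, y t = y₀ + ∫ s in (0:ℝ)..t, f s)
    (hy2 : ∀ t ∈ Ioc t₁ a, y t = y₀ + I (y t₁) + ∫ s in (0:ℝ)..t, f s) :
    ∃! t, t ∈ Icc 0 a ∧ τ (y t) = t := by
  -- the globally integrable truncation of the selection
  set g : ℝ → EuclideanSpace ℝ (Fin N) := (Icc 0 a).indicator f with hgdef
  have hg : Integrable g volume := hf.integrable_indicator measurableSet_Icc
  have heq : ∀ u ∈ Icc (0:ℝ) a, (∫ r in (0:ℝ)..u, g r) = ∫ r in (0:ℝ)..u, f r := by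
    intro u hu
    apply intervalIntegral.integral_congr
    intro r hr
    rw [uIcc_of_le hu.1] at hr
    exact indicator_of_mem (show r ∈ Icc 0 a from ⟨hr.1, hr.2.trans hu.2⟩) f
  -- combination of the selection hypothesis and the transversality condition
  have hcomb : ∀ᵐ u ∂(volume.restrict (Icc 0 a)), fderiv ℝ τ (y u) (f u) ≤ 1 - p := by
    filter_upwards [hsel, hH3] with u h1 h2
    linarith [h2 (y u) (f u) h1]
  -- Branch 1 : before the jump, τ(y s) > s
  have key1 : ∀ s ∈ Ico (0:ℝ) t₁, s < τ (y s) := by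
    intro s hs
    have hsub : Icc s t₁ ⊆ Icc 0 a := Icc_subset_Icc hs.1 ht₁.2
    have hB : ∀ᵐ u ∂(volume.restrict (Icc s t₁)),
        fderiv ℝ τ (y₀ + ∫ r in (0:ℝ)..u, g r) (g u) ≤ 1 - p := by
      filter_upwards [ae_restrict_of_ae_restrict_of_subset hsub hcomb,
        ae_restrict_mem measurableSet_Icc] with u h1 h2
      have hu0a : u ∈ Icc (0:ℝ) a := hsub h2
      have hgu : g u = f u := indicator_of_mem hu0a f
      have hyu : y₀ + (∫ r in (0:ℝ)..u, g r) = y u := by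
        rw [heq u hu0a, ← hy1 u ⟨hu0a.1, h2.2⟩]
      rw [hyu, hgu]
      exact h1
    have hkey := key_ineq τ hτ M hM g hg y₀ s t₁ hs.1 hs.2.le (1 - p) hB
    rw [heq t₁ ht₁, heq s (hsub (left_mem_Icc.2 hs.2.le)),
      ← hy1 t₁ (right_mem_Icc.2 (le_trans hs.1 hs.2.le)),
      ← hy1 s ⟨hs.1, hs.2.le⟩, hjump] at hkey
    nlinarith [hs.2]
  -- Branch 2 : after the jump, τ(y t) < t
  have key2 : ∀ t ∈ Ioc t₁ a, τ (y t) < t := by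
    intro t ht
    have hsub : Icc t₁ t ⊆ Icc 0 a := Icc_subset_Icc ht₁.1 ht.2
    have hne : ∀ᵐ u ∂(volume.restrict (Icc t₁ t)), u ≠ t₁ := by
      refine ae_restrict_of_ae ?_
      rw [ae_iff]
      have : {u : ℝ | ¬u ≠ t₁} = {t₁} := by ext u; simp
      rw [this]
      exact measure_singleton t₁
    have hB : ∀ᵐ u ∂(volume.restrict (Icc t₁ t)),
        fderiv ℝ τ ((y₀ + I (y t₁)) + ∫ r in (0:ℝ)..u, g r) (g u) ≤ 1 - p := by
      filter_upwards [ae_restrict_of_ae_restrict_of_subset hsub hcomb,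
        ae_restrict_mem measurableSet_Icc, hne] with u h1 h2 h3
      have hu0a : u ∈ Icc (0:ℝ) a := hsub h2
      have hgu : g u = f u := indicator_of_mem hu0a f
      have hyu : (y₀ + I (y t₁)) + (∫ r in (0:ℝ)..u, g r) = y u := by
        rw [heq u hu0a, ← hy2 u ⟨lt_of_le_of_ne h2.1 (Ne.symm h3), hu0a.2⟩]
      rw [hyu, hgu]
      exact h1
    have hkey := key_ineq τ hτ M hM g hg (y₀ + I (y t₁)) t₁ t ht₁.1 ht.1.le (1 - p) hB
    have hYt : (y₀ + I (y t₁)) + (∫ r in (0:ℝ)..t, g r) = y t := by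
      rw [heq t ⟨le_trans ht₁.1 ht.1.le, ht.2⟩, ← hy2 t ht]
    have hYt₁ : (y₀ + I (y t₁)) + (∫ r in (0:ℝ)..t₁, g r) = y t₁ + I (y t₁) := by
      rw [heq t₁ ht₁, hy1 t₁ (right_mem_Icc.2 ht₁.1)]
      abel
    rw [hYt, hYt₁] at hkey
    have hjI : τ (y t₁ + I (y t₁)) ≤ t₁ := (hτI (y t₁)).trans_eq hjump
    nlinarith [ht.1]
  -- conclusion
  refine ⟨t₁, ⟨ht₁, hjump⟩, ?_⟩
  rintro t ⟨htIcc, hτt⟩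
  by_contra hneq
  rcases lt_or_gt_of_ne hneq with hlt | hgt
  · exact absurd hτt (key1 t ⟨htIcc.1, hlt⟩).ne'
  · exact absurd hτt (key2 t ⟨hgt, htIcc.2⟩).ne
end
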